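/- arXiv:1904.08855 — 3 statements merged into one kernel-verified Lean document; each statement's English description precedes it below -/
import Mathlib

section
/- Suppose conditions (C) hold: γ(S,σ) + 2ξ(S)·η(σ) < 1 and ξ(S) − η(σ) ≤ 1. If ξ(S) > 0, then for every r with r̲ < r < r̄, every u in the closure of D(r) has all components nonzero and F(u) ∈ D(r); that is, F maps the closure of D(r) into D(r). If ξ(S) = 0, the same conclusion holds for every r > 0. -/
open Complex

/-- `η_i(σ) := Σ_j Z̃_{ij} · conj(σ_j)` -/
noncomputable def etaI {n : ℕ} (Z : Matrix (Fin n) (Fin n) ℂ) (σ : Fin n → ℂ) (i : Fin n) : ℂ :=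
  ∑ j, Z i j * (starRingEnd ℂ) (σ j)

/-- `ξ_i(S) := Σ_j |Z̃_{ij} · S_j|` -/
noncomputable def xiI {n : ℕ} (Z : Matrix (Fin n) (Fin n) ℂ) (S : Fin n → ℂ) (i : Fin n) : ℝ :=
  ∑ j, ‖Z i j * S j‖

/-- `γ_i(S,σ) := 2(ξ_i(S) + Re η_i(σ)) − ξ_i(S)² − |η_i(σ)|²` -/
noncomputable def gammaI {n : ℕ} (Z : Matrix (Fin n) (Fin n) ℂ) (S σ : Fin n → ℂ)
    (i : Fin n) : ℝ :=
  2 * (xiI Z S i + (etaI Z σ i).re) - (xiI Z S i) ^ 2 - ‖etaI Z σ i‖ ^ 2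

/-- `η(σ) := max_i |η_i(σ)|` -/
noncomputable def etaMax {n : ℕ} (Z : Matrix (Fin n) (Fin n) ℂ) (σ : Fin n → ℂ) : ℝ :=
  ⨆ i, ‖etaI Z σ i‖

/-- `ξ(S) := max_i ξ_i(S)` -/
noncomputable def xiMax {n : ℕ} (Z : Matrix (Fin n) (Fin n) ℂ) (S : Fin n → ℂ) : ℝ :=
  ⨆ i, xiI Z S i

/-- `γ(S,σ) := max_i γ_i(S,σ)` -/
noncomputable def gammaMax {n : ℕ} (Z : Matrix (Fin n) (Fin n) ℂ) (S σ : Fin n → ℂ) : ℝ :=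
  ⨆ i, gammaI Z S σ i

/-- `r̲ := sqrt((1−γ − √Δ)/(2ξ(S)²))` where `Δ = (1−γ)² − 4ξ(S)²η(σ)²` -/
noncomputable def rLow {n : ℕ} (Z : Matrix (Fin n) (Fin n) ℂ) (S σ : Fin n → ℂ) : ℝ :=
  Real.sqrt ((1 - gammaMax Z S σ -
      Real.sqrt ((1 - gammaMax Z S σ) ^ 2 - 4 * (xiMax Z S) ^ 2 * (etaMax Z σ) ^ 2)) /
    (2 * (xiMax Z S) ^ 2))

/-- `r̄ := sqrt((1−γ + √Δ)/(2ξ(S)²))` where `Δ = (1−γ)² − 4ξ(S)²η(σ)²` -/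
noncomputable def rHigh {n : ℕ} (Z : Matrix (Fin n) (Fin n) ℂ) (S σ : Fin n → ℂ) : ℝ :=
  Real.sqrt ((1 - gammaMax Z S σ +
      Real.sqrt ((1 - gammaMax Z S σ) ^ 2 - 4 * (xiMax Z S) ^ 2 * (etaMax Z σ) ^ 2)) /
    (2 * (xiMax Z S) ^ 2))

/-- the fixed point power flow map
`F(u)_i := 1 − Σ_j Z̃_{ij}·conj(σ_j) + Σ_j Z̃_{ij}·(1 − 1/conj(u_j))·conj(S_j)` -/
noncomputable def pfMap {n : ℕ} (Z : Matrix (Fin n) (Fin n) ℂ) (S σ : Fin n → ℂ)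
    (u : Fin n → ℂ) : Fin n → ℂ :=
  fun i => 1 - ∑ j, Z i j * (starRingEnd ℂ) (σ j)
    + ∑ j, Z i j * (1 - 1 / (starRingEnd ℂ) (u j)) * (starRingEnd ℂ) (S j)

/-- `D(r) := {u : |1 − η_i(σ) − u_i| < r·ξ_i(S)` whenever `ξ_i(S) > 0`, and
`u_i = 1 − η_i(σ)` whenever `ξ_i(S) = 0}` -/
noncomputable def Dset {n : ℕ} (Z : Matrix (Fin n) (Fin n) ℂ) (S σ : Fin n → ℂ)
    (r : ℝ) : Set (Fin n → ℂ) :=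
  {u | ∀ i, (0 < xiI Z S i → ‖1 - etaI Z σ i - u i‖ < r * xiI Z S i) ∧
            (xiI Z S i = 0 → u i = 1 - etaI Z σ i)}

set_option maxHeartbeats 1000000

section Aux


lemma xt_bound (ξ η γ s x E F m : ℝ) (hs : 0 < s) (hs1 : s < 1) (hx : 0 ≤ x) (hxξ : x ≤ ξ)
    (hC2 : ξ - η ≤ 1) (hm0 : 0 ≤ m) (hm2 : m ^ 2 = E ^ 2 + F ^ 2) (hmη : m ≤ η)
    (hgγ : 2 * (x + E) - x ^ 2 - m ^ 2 ≤ γ)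
    (hQg : ξ ^ 2 * s ^ 2 - (1 - γ) * s + η ^ 2 < 0) :
    x * (1 - s) < 1 := by
  by_contra hcon
  push_neg at hcon
  have htpos : 0 < 1 - s := by linarith
  have hu0 : 0 ≤ x * (1 - s) - 1 := by linarith
  have hQ' : x ^ 2 * s ^ 2 - (1 - (2 * (x + E) - x ^ 2 - m ^ 2)) * s + η ^ 2 < 0 := by
    nlinarith [mul_le_mul hxξ hxξ hx (le_trans hx hxξ), sq_nonneg s,
      mul_nonneg (sub_nonneg.2 hgγ) hs.le]
  have hid : s * (x * (1 - s) - 1) ^ 2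
      = ((1 - s) * E + s) ^ 2 + ((1 - s) * F) ^ 2
        - (1 - s) * (x ^ 2 * s ^ 2 - (1 - (2 * (x + E) - x ^ 2 - m ^ 2)) * s + m ^ 2) := by
    nlinarith [hm2]
  have hE : -m ≤ E := by nlinarith
  have h1 : ((1 - s) * m - s) ^ 2 ≤ ((1 - s) * E + s) ^ 2 + ((1 - s) * F) ^ 2 := by
    have hr : ((1 - s) * E + s) ^ 2 + ((1 - s) * F) ^ 2 - ((1 - s) * m - s) ^ 2
        = (1 - s) ^ 2 * (E ^ 2 + F ^ 2 - m ^ 2) + 2 * ((1 - s) * s) * (E + m) := by ring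
    have h2 := mul_nonneg (mul_nonneg (by norm_num : (0:ℝ) ≤ 2) (mul_nonneg htpos.le hs.le))
      (by linarith : (0:ℝ) ≤ E + m)
    nlinarith [hr]
  have h2 : ((1 - s) * η - s) ^ 2 ≤ ((1 - s) * m - s) ^ 2 + (1 - s) * (η ^ 2 - m ^ 2) := by
    have hr : ((1 - s) * m - s) ^ 2 + (1 - s) * (η ^ 2 - m ^ 2) - ((1 - s) * η - s) ^ 2
        = ((1 - s) * s) * ((η - m) * (η + m + 2)) := by ring
    have hp := mul_nonneg (mul_nonneg htpos.le hs.le)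
      (mul_nonneg (by linarith : (0:ℝ) ≤ η - m) (by linarith : (0:ℝ) ≤ η + m + 2))
    linarith
  have h3 : x * (1 - s) - 1 ≤ (1 - s) * η - s := by nlinarith
  have hsplit : (1 - s) * (x ^ 2 * s ^ 2 - (1 - (2 * (x + E) - x ^ 2 - m ^ 2)) * s + m ^ 2)
      = (1 - s) * (x ^ 2 * s ^ 2 - (1 - (2 * (x + E) - x ^ 2 - m ^ 2)) * s + η ^ 2)
        - (1 - s) * (η ^ 2 - m ^ 2) := by ring
  have htQ' : (1 - s) * (x ^ 2 * s ^ 2 - (1 - (2 * (x + E) - x ^ 2 - m ^ 2)) * s + η ^ 2) < 0 :=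
    mul_neg_of_pos_of_neg htpos hQ'
  have hch : ((1 - s) * m - s) ^ 2 + (1 - s) * (η ^ 2 - m ^ 2) < s * (x * (1 - s) - 1) ^ 2 := by
    linarith
  have h4 : (x * (1 - s) - 1) ^ 2 ≤ ((1 - s) * η - s) ^ 2 := by nlinarith
  have h5 : s * (x * (1 - s) - 1) ^ 2 ≤ (x * (1 - s) - 1) ^ 2 := by
    nlinarith [sq_nonneg (x * (1 - s) - 1)]
  linarith

lemma real_core (s x B m Q : ℝ) (hs : 0 < s) (hx : 0 ≤ x) (hB : 0 ≤ B) (hm : 0 ≤ m)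
    (hm2 : m ^ 2 ≤ s * x ^ 2) (hQ : Q < 0)
    (hid : B ^ 2 = s * (1 - x * (1 - s)) ^ 2 + (1 - s) * Q)
    (hxt : s < 1 → x * (1 - s) < 1) :
    (1 - s) * m ^ 2 + 2 * B * m + Q - (x ^ 2 * s ^ 2 + 2 * x * s - x ^ 2 * s) < 0 := by
  rcases lt_trichotomy s 1 with hs1 | hs1 | hs1
  · -- t > 0
    have hxt1 : x * (1 - s) < 1 := hxt hs1
    have ht : 0 < 1 - s := by linarith
    have hB2 : B ^ 2 ≤ s * (1 - x * (1 - s)) ^ 2 := by nlinarith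
    have hBm : B * m ≤ s * x * (1 - x * (1 - s)) := by
      have h1 : (B * m) ^ 2 ≤ (s * x * (1 - x * (1 - s))) ^ 2 := by
        calc (B * m) ^ 2 = B ^ 2 * m ^ 2 := by ring
        _ ≤ (s * (1 - x * (1 - s)) ^ 2) * (s * x ^ 2) := by
            apply mul_le_mul hB2 hm2 (sq_nonneg m) (by positivity)
        _ = (s * x * (1 - x * (1 - s))) ^ 2 := by ring
      have h2 : 0 ≤ s * x * (1 - x * (1 - s)) := by
        apply mul_nonneg (mul_nonneg hs.le hx); linarith
      nlinarith [mul_nonneg hB hm]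
    have htm : (1 - s) * m ^ 2 ≤ (1 - s) * (s * x ^ 2) := by nlinarith
    nlinarith
  · -- s = 1
    subst hs1
    have hB1 : B = 1 := by
      have : B ^ 2 = 1 := by rw [hid]; ring
      nlinarith
    have hmx : m ≤ x := by nlinarith
    rw [hB1]; nlinarith
  · -- s > 1
    have ht : 0 < s - 1 := by linarith
    rcases le_or_gt (B ^ 2) ((s - 1) ^ 2 * (s * x ^ 2)) with hc | hc
    · -- B ≤ τ ρ : bound by vertex value
      have hv : (s - 1) * ((1 - s) * m ^ 2 + 2 * B * m) ≤ B ^ 2 := by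
        nlinarith [sq_nonneg ((s - 1) * m - B)]
      -- B^2/τ ≤ τ s x^2, and τ s x^2 + Q - R < 0 since R = τ s x^2 + 2 x s
      nlinarith [mul_nonneg (mul_nonneg hx hs.le) (by norm_num : (0:ℝ) ≤ 2)]
    · -- B > τ ρ
      set ρ : ℝ := Real.sqrt s * x with hρ
      have hρ0 : 0 ≤ ρ := mul_nonneg (Real.sqrt_nonneg s) hx
      have hρ2 : ρ ^ 2 = s * x ^ 2 := by
        rw [hρ, mul_pow, Real.sq_sqrt hs.le]
      have hmρ : m ≤ ρ := by nlinarith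
      have hBρ : (s - 1) * ρ < B := by nlinarith
      -- monotone step : value at m ≤ value at ρ
      have hmono : (1 - s) * m ^ 2 + 2 * B * m ≤ (1 - s) * ρ ^ 2 + 2 * B * ρ := by
        have key : (ρ - m) * (2 * B + (1 - s) * (ρ + m)) ≥ 0 := by
          apply mul_nonneg (by linarith)
          nlinarith
        nlinarith [key]
      -- final : 2 B ρ < R + P + τ ρ² with P = -Q
      have hfin : 2 * B * ρ < (x ^ 2 * s ^ 2 + 2 * x * s - x ^ 2 * s) + (-Q) + (s - 1) * ρ ^ 2 := by
        have hRpos : 0 ≤ x ^ 2 * s ^ 2 + 2 * x * s - x ^ 2 * s := by nlinarith [sq_nonneg x]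
        have hrhs : 0 < (x ^ 2 * s ^ 2 + 2 * x * s - x ^ 2 * s) + (-Q) + (s - 1) * ρ ^ 2 := by
          nlinarith [sq_nonneg ρ]
        have hexp : (2 * B * ρ) ^ 2
            = 4 * (s * (1 - x * (1 - s)) ^ 2 + (1 - s) * Q) * (s * x ^ 2) := by
          have : (2 * B * ρ) ^ 2 = 4 * B ^ 2 * ρ ^ 2 := by ring
          rw [this, hid, hρ2]
        have hdiff : ((x ^ 2 * s ^ 2 + 2 * x * s - x ^ 2 * s) + (-Q) + (s - 1) * ρ ^ 2) ^ 2
            - (2 * B * ρ) ^ 2 = 4 * x * s * (-Q) + Q ^ 2 := by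
          rw [hexp, hρ2]; ring
        have hsq : (2 * B * ρ) ^ 2 < ((x ^ 2 * s ^ 2 + 2 * x * s - x ^ 2 * s) + (-Q) + (s - 1) * ρ ^ 2) ^ 2 := by
          nlinarith [mul_nonneg (mul_nonneg (mul_nonneg (by norm_num : (0:ℝ) ≤ 4) hx) hs.le) (by linarith : (0:ℝ) ≤ -Q), sq_nonneg Q, hQ]
        nlinarith [mul_nonneg (mul_nonneg (by norm_num : (0:ℝ) ≤ 2) hB) hρ0]
      nlinarith [hmono, hfin]
lemma key_scalar (ξ η γ r x : ℝ) (e w : ℂ) (hr : 0 < r) (hx : 0 ≤ x) (hxξ : x ≤ ξ)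
    (hmη : ‖e‖ ≤ η) (hC2 : ξ - η ≤ 1)
    (hg : 2 * (x + e.re) - x ^ 2 - (‖e‖) ^ 2 ≤ γ)
    (hQg : ξ ^ 2 * r ^ 4 - (1 - γ) * r ^ 2 + η ^ 2 < 0)
    (hw : ‖w‖ ≤ r * x) :
    ((1 : ℂ) - e + w ≠ 0) ∧ ‖e - w‖ < r * ‖1 - e + w‖ := by
  set E : ℝ := e.re with hE
  set F : ℝ := e.im with hF
  set W1 : ℝ := w.re with hW1
  set W2 : ℝ := w.im with hW2
  have hme : (‖e‖) ^ 2 = E ^ 2 + F ^ 2 := by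
    rw [Complex.sq_norm, Complex.normSq_apply]; ring
  have hmw : (‖w‖) ^ 2 = W1 ^ 2 + W2 ^ 2 := by
    rw [Complex.sq_norm, Complex.normSq_apply]; ring
  have hs : 0 < r ^ 2 := by positivity
  have hη0 : 0 ≤ η := le_trans (norm_nonneg e) hmη
  -- Q < 0
  have hQ : x ^ 2 * (r ^ 2) ^ 2
      - (1 - (2 * (x + E) - x ^ 2 - (E ^ 2 + F ^ 2))) * r ^ 2 + (E ^ 2 + F ^ 2) < 0 := by
    have h1 : E ^ 2 + F ^ 2 ≤ η ^ 2 := by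
      rw [← hme]; exact pow_le_pow_left₀ (norm_nonneg e) hmη 2
    have h2 : x ^ 2 ≤ ξ ^ 2 := pow_le_pow_left₀ hx hxξ 2
    have h3 : 2 * (x + E) - x ^ 2 - (E ^ 2 + F ^ 2) ≤ γ := by rw [← hme]; exact hg
    nlinarith [sq_nonneg (r ^ 2), mul_nonneg (sub_nonneg.2 h3) hs.le,
      mul_le_mul_of_nonneg_right h2 (sq_nonneg (r ^ 2))]
  have hxt : r ^ 2 < 1 → x * (1 - r ^ 2) < 1 := by
    intro h1
    exact xt_bound ξ η γ (r ^ 2) x E F (‖e‖) hs h1 hx hxξ hC2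
      (norm_nonneg e) hme hmη hg (by nlinarith)
  set B : ℝ := Real.sqrt (((1 - r ^ 2) * E + r ^ 2) ^ 2 + ((1 - r ^ 2) * F) ^ 2) with hBdef
  have hB0 : 0 ≤ B := Real.sqrt_nonneg _
  have hB2 : B ^ 2 = ((1 - r ^ 2) * E + r ^ 2) ^ 2 + ((1 - r ^ 2) * F) ^ 2 :=
    Real.sq_sqrt (by positivity)
  have hid : B ^ 2 = r ^ 2 * (1 - x * (1 - r ^ 2)) ^ 2
      + (1 - r ^ 2) * (x ^ 2 * (r ^ 2) ^ 2
        - (1 - (2 * (x + E) - x ^ 2 - (E ^ 2 + F ^ 2))) * r ^ 2 + (E ^ 2 + F ^ 2)) := by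
    rw [hB2]; ring
  set m : ℝ := ‖w‖ with hmdef
  have hm0 : 0 ≤ m := norm_nonneg w
  have hm2 : m ^ 2 ≤ r ^ 2 * x ^ 2 := by
    have := pow_le_pow_left₀ hm0 hw 2
    calc m ^ 2 ≤ (r * x) ^ 2 := this
    _ = r ^ 2 * x ^ 2 := by ring
  have core := real_core (r ^ 2) x B m _ hs hx hB0 hm0 hm2 hQ hid hxt
  -- Cauchy–Schwarz step
  have cauchy : -(B * m) ≤ ((1 - r ^ 2) * E + r ^ 2) * W1 + ((1 - r ^ 2) * F) * W2 := by
    have hcs : (-(((1 - r ^ 2) * E + r ^ 2) * W1 + ((1 - r ^ 2) * F) * W2)) ^ 2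
        ≤ (B * m) ^ 2 := by
      have h1 : (B * m) ^ 2 = B ^ 2 * m ^ 2 := by ring
      rw [h1, hB2, hmw]
      nlinarith [sq_nonneg (((1 - r ^ 2) * E + r ^ 2) * W2 - ((1 - r ^ 2) * F) * W1)]
    have := le_of_pow_le_pow_left₀ (by norm_num) (mul_nonneg hB0 hm0) hcs
    linarith
  -- squared main inequality
  have hN2 : Complex.normSq (1 - e + w) = (1 - E + W1) ^ 2 + (W2 - F) ^ 2 := by
    rw [Complex.normSq_apply]; simp [hE, hF, hW1, hW2]; ring
  have hN1 : Complex.normSq (e - w) = (E - W1) ^ 2 + (F - W2) ^ 2 := by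
    rw [Complex.normSq_apply]; simp [hE, hF, hW1, hW2]; ring
  have hmain : Complex.normSq (e - w) < r ^ 2 * Complex.normSq (1 - e + w) := by
    rw [hN1, hN2]
    have hTid : (E - W1) ^ 2 + (F - W2) ^ 2 - r ^ 2 * ((1 - E + W1) ^ 2 + (W2 - F) ^ 2)
        = (1 - r ^ 2) * (W1 ^ 2 + W2 ^ 2)
          - 2 * (((1 - r ^ 2) * E + r ^ 2) * W1 + ((1 - r ^ 2) * F) * W2)
          + ((x ^ 2 * (r ^ 2) ^ 2
            - (1 - (2 * (x + E) - x ^ 2 - (E ^ 2 + F ^ 2))) * r ^ 2 + (E ^ 2 + F ^ 2))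
            - (x ^ 2 * (r ^ 2) ^ 2 + 2 * x * r ^ 2 - x ^ 2 * r ^ 2)) := by ring
    have hmm : (1 - r ^ 2) * (W1 ^ 2 + W2 ^ 2) = (1 - r ^ 2) * m ^ 2 := by rw [hmw]
    linarith [hTid, core, cauchy, hmm]
  have hpos : 0 < Complex.normSq (1 - e + w) := by
    nlinarith [Complex.normSq_nonneg (e - w), Complex.normSq_nonneg (1 - e + w)]
  have hne : (1 : ℂ) - e + w ≠ 0 := by
    intro h0; rw [h0, Complex.normSq_zero] at hpos; exact lt_irrefl 0 hpos
  refine ⟨hne, ?_⟩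
  have habs : (‖e - w‖) ^ 2 < (r * ‖1 - e + w‖) ^ 2 := by
    rw [Complex.sq_norm, mul_pow, Complex.sq_norm]; exact hmain
  exact lt_of_pow_lt_pow_left₀ 2 (by positivity) habs


lemma xiI_nonneg {n : ℕ} (Z : Matrix (Fin n) (Fin n) ℂ) (S : Fin n → ℂ) (i : Fin n) :
    0 ≤ xiI Z S i :=
  Finset.sum_nonneg fun j _ => norm_nonneg _

lemma xiI_term_zero {n : ℕ} (Z : Matrix (Fin n) (Fin n) ℂ) (S : Fin n → ℂ) (i : Fin n)
    (h : xiI Z S i = 0) (j : Fin n) : Z i j * S j = 0 := by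
  have h0 := (Finset.sum_eq_zero_iff_of_nonneg
    (fun j (_ : j ∈ Finset.univ) => norm_nonneg (Z i j * S j))).mp h j (Finset.mem_univ j)
  exact norm_eq_zero.mp h0

lemma pf_sub {n : ℕ} (Z : Matrix (Fin n) (Fin n) ℂ) (S σ : Fin n → ℂ) (u : Fin n → ℂ)
    (i : Fin n) :
    (1 : ℂ) - etaI Z σ i - pfMap Z S σ u i
      = -∑ j, Z i j * (1 - 1 / (starRingEnd ℂ) (u j)) * (starRingEnd ℂ) (S j) := by
  simp only [pfMap, etaI]; ring

lemma pf_eq {n : ℕ} (Z : Matrix (Fin n) (Fin n) ℂ) (S σ : Fin n → ℂ) (u : Fin n → ℂ)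
    (i : Fin n) (h : xiI Z S i = 0) : pfMap Z S σ u i = 1 - etaI Z σ i := by
  have hz : ∀ j : Fin n, Z i j * (1 - 1 / (starRingEnd ℂ) (u j)) * (starRingEnd ℂ) (S j) = 0 := by
    intro j
    rcases mul_eq_zero.mp (xiI_term_zero Z S i h j) with h' | h'
    · rw [h', zero_mul, zero_mul]
    · rw [h', map_zero, mul_zero]
  simp only [pfMap, etaI, Finset.sum_eq_zero (fun j _ => hz j), add_zero]

lemma pf_lt {n : ℕ} (Z : Matrix (Fin n) (Fin n) ℂ) (S σ : Fin n → ℂ) (u : Fin n → ℂ)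
    (r : ℝ) (i : Fin n) (hpos : 0 < xiI Z S i)
    (hq : ∀ j, ‖(1 : ℂ) - 1 / (starRingEnd ℂ) (u j)‖ < r) :
    ‖1 - etaI Z σ i - pfMap Z S σ u i‖ < r * xiI Z S i := by
  rw [pf_sub, norm_neg]
  have hterm : ∀ j : Fin n,
      ‖Z i j * (1 - 1 / (starRingEnd ℂ) (u j)) * (starRingEnd ℂ) (S j)‖
        = ‖Z i j * S j‖ * ‖1 - 1 / (starRingEnd ℂ) (u j)‖ := by
    intro j
    rw [norm_mul, norm_mul, norm_mul, Complex.norm_conj]; ring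
  have hsum : ‖∑ j, Z i j * (1 - 1 / (starRingEnd ℂ) (u j)) * (starRingEnd ℂ) (S j)‖
      ≤ ∑ j, ‖Z i j * S j‖ * ‖(1 : ℂ) - 1 / (starRingEnd ℂ) (u j)‖ := by
    refine le_trans (norm_sum_le _ _) (le_of_eq (Finset.sum_congr rfl fun j _ => hterm j))
  have hlt : ∑ j, ‖Z i j * S j‖ * ‖(1 : ℂ) - 1 / (starRingEnd ℂ) (u j)‖
      < ∑ j, ‖Z i j * S j‖ * r := by
    apply Finset.sum_lt_sum
    · intro j _
      exact mul_le_mul_of_nonneg_left (hq j).le (norm_nonneg _)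
    · have hne : ∃ j ∈ Finset.univ, ‖Z i j * S j‖ ≠ 0 := by
        by_contra hall
        push_neg at hall
        have : xiI Z S i = 0 := Finset.sum_eq_zero fun j hj => hall j hj
        exact hpos.ne' this
      obtain ⟨j0, hj0mem, hj0⟩ := hne
      refine ⟨j0, hj0mem, ?_⟩
      have hj0pos : 0 < ‖Z i j0 * S j0‖ :=
        lt_of_le_of_ne (norm_nonneg _) (Ne.symm hj0)
      exact (mul_lt_mul_iff_right₀ hj0pos).mpr (hq j0)
  have hfin : ∑ j, ‖Z i j * S j‖ * r = r * xiI Z S i := by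
    rw [xiI, Finset.mul_sum]
    exact Finset.sum_congr rfl fun j _ => mul_comm _ _
  calc ‖∑ j, Z i j * (1 - 1 / (starRingEnd ℂ) (u j)) * (starRingEnd ℂ) (S j)‖
      ≤ ∑ j, ‖Z i j * S j‖ * ‖(1 : ℂ) - 1 / (starRingEnd ℂ) (u j)‖ := hsum
    _ < ∑ j, ‖Z i j * S j‖ * r := hlt
    _ = r * xiI Z S i := hfin

lemma closure_Dset_subset {n : ℕ} (Z : Matrix (Fin n) (Fin n) ℂ) (S σ : Fin n → ℂ)
    (r : ℝ) :
    closure (Dset Z S σ r)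
      ⊆ {u : Fin n → ℂ | ∀ i, ‖1 - etaI Z σ i - u i‖ ≤ r * xiI Z S i} := by
  apply closure_minimal
  · intro u hu i
    rcases (xiI_nonneg Z S i).lt_or_eq with h | h
    · exact ((hu i).1 h).le
    · rw [(hu i).2 h.symm]
      have h1 : (1 : ℂ) - etaI Z σ i - (1 - etaI Z σ i) = 0 := by ring
      rw [h1, norm_zero, ← h, mul_zero]
  · rw [Set.setOf_forall]
    apply isClosed_iInter
    intro i
    exact isClosed_le
      (continuous_norm.comp (continuous_const.sub (continuous_apply i)))
      continuous_const

lemma ratio_lt {n : ℕ} (u : Fin n → ℂ) (r : ℝ) (j : Fin n)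
    (hne : u j ≠ 0) (hlt : ‖1 - u j‖ < r * ‖u j‖) :
    ‖(1 : ℂ) - 1 / (starRingEnd ℂ) (u j)‖ < r := by
  have hcne : (starRingEnd ℂ) (u j) ≠ 0 := by
    simpa using hne
  have e1 : ((1 : ℂ) - 1 / (starRingEnd ℂ) (u j)) * (starRingEnd ℂ) (u j)
      = (starRingEnd ℂ) (u j) - 1 := by
    field_simp
  have e2 : ‖(starRingEnd ℂ) (u j) - 1‖ = ‖1 - u j‖ := by
    have h3 : (starRingEnd ℂ) (u j) - 1 = (starRingEnd ℂ) (u j - 1) := by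
      rw [map_sub, map_one]
    rw [h3, Complex.norm_conj, ← neg_sub, norm_neg]
  have hmul : ‖(1 : ℂ) - 1 / (starRingEnd ℂ) (u j)‖ * ‖u j‖
      = ‖1 - u j‖ := by
    rw [← Complex.norm_conj (u j), ← norm_mul, e1, e2]
  have hup : 0 < ‖u j‖ := norm_pos_iff.mpr hne
  have : ‖(1 : ℂ) - 1 / (starRingEnd ℂ) (u j)‖ * ‖u j‖
      < r * ‖u j‖ := by rw [hmul]; exact hlt
  exact lt_of_mul_lt_mul_right this hup.le

end Aux

/-- under conditions (C), if `ξ(S) > 0` then for every `r̲ < r < r̄` the map `F`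
sends the closure of `D(r)` into `D(r)` (and every point of the closure has nonzero
components); if `ξ(S) = 0` the same holds for every `r > 0`. -/
theorem pf_map_invariant_polydisc {n : ℕ} (hn : 1 ≤ n)
    (Z : Matrix (Fin n) (Fin n) ℂ) (hZ : IsUnit Z.det)
    (S0 σ S : Fin n → ℂ) (hS : S = S0 + σ)
    (hc1 : gammaMax Z S σ + 2 * xiMax Z S * etaMax Z σ < 1)
    (hc2 : xiMax Z S - etaMax Z σ ≤ 1) :
    (0 < xiMax Z S → ∀ r : ℝ, rLow Z S σ < r → r < rHigh Z S σ →
      ∀ u ∈ closure (Dset Z S σ r), (∀ i, u i ≠ 0) ∧ pfMap Z S σ u ∈ Dset Z S σ r) ∧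
    (xiMax Z S = 0 → ∀ r : ℝ, 0 < r →
      ∀ u ∈ closure (Dset Z S σ r), (∀ i, u i ≠ 0) ∧ pfMap Z S σ u ∈ Dset Z S σ r) := by
  have hinst : Nonempty (Fin n) := ⟨⟨0, hn⟩⟩
  have hξle : ∀ i, xiI Z S i ≤ xiMax Z S := fun i =>
    le_ciSup (Set.Finite.bddAbove (Set.finite_range _)) i
  have hηle : ∀ i, ‖etaI Z σ i‖ ≤ etaMax Z σ := fun i =>
    le_ciSup (f := fun i => ‖etaI Z σ i‖)
      (Set.Finite.bddAbove (Set.finite_range _)) i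
  have hγle : ∀ i, gammaI Z S σ i ≤ gammaMax Z S σ := fun i =>
    le_ciSup (Set.Finite.bddAbove (Set.finite_range _)) i
  have hη0 : 0 ≤ etaMax Z σ :=
    le_trans (norm_nonneg _) (hηle ⟨0, hn⟩)
  have hξ0 : 0 ≤ xiMax Z S := le_trans (xiI_nonneg Z S ⟨0, hn⟩) (hξle ⟨0, hn⟩)
  constructor
  · -- ξ > 0 case
    intro hξpos r hrl hrh u hu
    have hr0 : 0 < r := lt_of_le_of_lt (Real.sqrt_nonneg _) hrl
    -- derive the quartic inequality
    set γm := gammaMax Z S σ with hγm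
    set ξm := xiMax Z S with hξm
    set ηm := etaMax Z σ with hηm
    have hΔ : 0 < (1 - γm) ^ 2 - 4 * ξm ^ 2 * ηm ^ 2 := by
      nlinarith [mul_nonneg hξ0 hη0, hc1]
    have h1γ : 0 < 1 - γm := by nlinarith [mul_nonneg hξ0 hη0, hc1]
    have hsqΔ : Real.sqrt ((1 - γm) ^ 2 - 4 * ξm ^ 2 * ηm ^ 2) ^ 2
        = (1 - γm) ^ 2 - 4 * ξm ^ 2 * ηm ^ 2 := Real.sq_sqrt hΔ.le
    have hsqΔ0 : 0 ≤ Real.sqrt ((1 - γm) ^ 2 - 4 * ξm ^ 2 * ηm ^ 2) := Real.sqrt_nonneg _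
    have hsqΔlt : Real.sqrt ((1 - γm) ^ 2 - 4 * ξm ^ 2 * ηm ^ 2) ≤ 1 - γm := by
      have hle : (1 - γm) ^ 2 - 4 * ξm ^ 2 * ηm ^ 2 ≤ (1 - γm) ^ 2 := by nlinarith [sq_nonneg (ξm * ηm), sq_nonneg ξm, sq_nonneg ηm, mul_nonneg (sq_nonneg ξm) (sq_nonneg ηm)]
      have h := Real.sqrt_le_sqrt hle
      rwa [Real.sqrt_sq h1γ.le] at h
    have h2ξ : 0 < 2 * ξm ^ 2 := by positivity
    have hargl : 0 ≤ (1 - γm - Real.sqrt ((1 - γm) ^ 2 - 4 * ξm ^ 2 * ηm ^ 2)) / (2 * ξm ^ 2) :=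
      div_nonneg (by linarith) h2ξ.le
    have hargh : 0 ≤ (1 - γm + Real.sqrt ((1 - γm) ^ 2 - 4 * ξm ^ 2 * ηm ^ 2)) / (2 * ξm ^ 2) :=
      div_nonneg (by linarith) h2ξ.le
    have hrlsq : (1 - γm - Real.sqrt ((1 - γm) ^ 2 - 4 * ξm ^ 2 * ηm ^ 2)) / (2 * ξm ^ 2)
        < r ^ 2 := by
      have h := pow_lt_pow_left₀ hrl (Real.sqrt_nonneg _) (by norm_num : 2 ≠ 0)
      rwa [rLow, Real.sq_sqrt hargl] at h
    have hrhsq : r ^ 2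
        < (1 - γm + Real.sqrt ((1 - γm) ^ 2 - 4 * ξm ^ 2 * ηm ^ 2)) / (2 * ξm ^ 2) := by
      have h := pow_lt_pow_left₀ hrh hr0.le (by norm_num : 2 ≠ 0)
      rwa [rHigh, Real.sq_sqrt hargh] at h
    have hA : 1 - γm - Real.sqrt ((1 - γm) ^ 2 - 4 * ξm ^ 2 * ηm ^ 2) < r ^ 2 * (2 * ξm ^ 2) :=
      (div_lt_iff₀ h2ξ).mp hrlsq
    have hB : r ^ 2 * (2 * ξm ^ 2) < 1 - γm + Real.sqrt ((1 - γm) ^ 2 - 4 * ξm ^ 2 * ηm ^ 2) :=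
      (lt_div_iff₀ h2ξ).mp hrhsq
    have hquart : ξm ^ 2 * r ^ 4 - (1 - γm) * r ^ 2 + ηm ^ 2 < 0 := by
      have hf1 : 0 < Real.sqrt ((1 - γm) ^ 2 - 4 * ξm ^ 2 * ηm ^ 2)
          - (r ^ 2 * (2 * ξm ^ 2) - (1 - γm)) := by linarith
      have hf2 : 0 < Real.sqrt ((1 - γm) ^ 2 - 4 * ξm ^ 2 * ηm ^ 2)
          + (r ^ 2 * (2 * ξm ^ 2) - (1 - γm)) := by linarith
      have hmul := mul_pos hf1 hf2
      have h3 : 4 * ξm ^ 2 * (ξm ^ 2 * r ^ 4 - (1 - γm) * r ^ 2 + ηm ^ 2) < 0 := by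
        nlinarith [hmul, hsqΔ]
      by_contra hq0
      push_neg at hq0
      nlinarith [mul_nonneg (by positivity : (0:ℝ) ≤ 4 * ξm ^ 2) hq0]
    -- per-coordinate facts from closure
    have hu' := closure_Dset_subset Z S σ r hu
    have hkey : ∀ j, u j ≠ 0 ∧ ‖1 - u j‖ < r * ‖u j‖ := by
      intro j
      have h1 : ‖u j - (1 - etaI Z σ j)‖ ≤ r * xiI Z S j := by
        have h0 := hu' j
        rwa [show (1 : ℂ) - etaI Z σ j - u j = -(u j - (1 - etaI Z σ j)) by ring,
          norm_neg] at h0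
      have h2 := key_scalar ξm ηm γm r (xiI Z S j) (etaI Z σ j) (u j - (1 - etaI Z σ j))
        hr0 (xiI_nonneg Z S j) (hξle j) (hηle j) hc2 (hγle j) hquart h1
      constructor
      · have h3 := h2.1
        rwa [show (1 : ℂ) - etaI Z σ j + (u j - (1 - etaI Z σ j)) = u j by ring] at h3
      · have h3 := h2.2
        rwa [show etaI Z σ j - (u j - (1 - etaI Z σ j)) = 1 - u j by ring,
          show (1 : ℂ) - etaI Z σ j + (u j - (1 - etaI Z σ j)) = u j by ring] at h3
    have hq : ∀ j, ‖(1 : ℂ) - 1 / (starRingEnd ℂ) (u j)‖ < r := fun j =>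
      ratio_lt u r j (hkey j).1 (hkey j).2
    refine ⟨fun j => (hkey j).1, fun i => ⟨fun hpos => pf_lt Z S σ u r i hpos hq,
      fun h0 => pf_eq Z S σ u i h0⟩⟩
  · -- ξ = 0 case
    intro hξ00 r hr0 u hu
    have hxii : ∀ i, xiI Z S i = 0 := fun i =>
      le_antisymm (hξ00 ▸ hξle i) (xiI_nonneg Z S i)
    have hu' := closure_Dset_subset Z S σ r hu
    have hufix : ∀ i, u i = 1 - etaI Z σ i := by
      intro i
      have h0 := hu' i
      rw [hxii i, mul_zero] at h0
      have h1 : ‖1 - etaI Z σ i - u i‖ = 0 :=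
        le_antisymm h0 (norm_nonneg _)
      have h2 := norm_eq_zero.mp h1
      linear_combination -h2
    have hne : ∀ i, (1 : ℂ) - etaI Z σ i ≠ 0 := by
      intro i hzero
      have heta : etaI Z σ i = 1 := by linear_combination -hzero
      have hγi : gammaI Z S σ i = 1 := by
        rw [gammaI, hxii i, heta]
        simp [Complex.one_re]
        norm_num
      have hγlt1 : gammaMax Z S σ < 1 := by
        have := hc1
        rw [hξ00] at this
        simpa using this
      have := hγle i
      rw [hγi] at this
      linarith
    refine ⟨fun i => by rw [hufix i]; exact hne i, fun i =>
      ⟨fun hpos => absurd (hxii i ▸ hpos) (lt_irrefl 0),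
       fun _ => pf_eq Z S σ u i (hxii i)⟩⟩
end

section
/- Suppose conditions (C) hold: γ(S,σ) + 2ξ(S)·η(σ) < 1 and ξ(S) − η(σ) ≤ 1, and suppose ξ_i(S) > 0 for all i. Then there exists exactly one u ∈ ℂ^n with all components nonzero such that u = F(u) and |u_i − (1 − η_i(σ))| ≤ r̲·ξ_i(S) for all i = 1,…,n; that is, the fixed-point power flow equation has a unique solution in the closure of D(r̲). -/
open Complex

section PFauxSection

open Complex Metric ComplexConjugate

namespace PFaux

set_option maxHeartbeats 1000000




/-- key disk identity -/
lemma disk_identity (R : ℝ) (a b : ℂ) :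
    ‖(R:ℂ)^2 - conj a * b‖^2 - R^2 * ‖a - b‖^2
      = (R^2 - ‖a‖^2) * (R^2 - ‖b‖^2) := by
  simp only [Complex.sq_norm]
  simp only [Complex.normSq_apply, Complex.sub_re, Complex.sub_im, Complex.mul_re,
    Complex.mul_im, Complex.conj_re, Complex.conj_im, Complex.ofReal_re, Complex.ofReal_im,
    Complex.one_re, Complex.one_im, pow_two, Complex.mul_re, Complex.mul_im]
  ring

lemma sigma_le_one {R : ℝ} {a b : ℂ} (hR : 0 < R) (ha : ‖a‖ ≤ R)
    (hb : ‖b‖ ≤ R) :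
    ‖a - b‖ * R ≤ ‖(R:ℂ)^2 - conj a * b‖ := by
  have h := disk_identity R a b
  have h1 : 0 ≤ (R^2 - ‖a‖^2) * (R^2 - ‖b‖^2) := by
    have := norm_nonneg a
    have := norm_nonneg b
    have h2 : ‖a‖^2 ≤ R^2 := by nlinarith
    have h3 : ‖b‖^2 ≤ R^2 := by nlinarith
    nlinarith
  have h5 : 0 ≤ ‖a-b‖ * R := by positivity
  have h6 := norm_nonneg ((R:ℂ)^2 - conj a * b)
  nlinarith [norm_nonneg (a-b)]

lemma sigma_lt_one {R : ℝ} {a b : ℂ} (hR : 0 < R) (ha : ‖a‖ < R)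
    (hb : ‖b‖ < R) :
    ‖a - b‖ * R < ‖(R:ℂ)^2 - conj a * b‖ := by
  have h := disk_identity R a b
  have h1 : 0 < (R^2 - ‖a‖^2) * (R^2 - ‖b‖^2) := by
    have := norm_nonneg a
    have := norm_nonneg b
    have h2 : ‖a‖^2 < R^2 := by nlinarith
    have h3 : ‖b‖^2 < R^2 := by nlinarith
    nlinarith
  have h5 : 0 ≤ ‖a-b‖ * R := by positivity
  have h6 := norm_nonneg ((R:ℂ)^2 - conj a * b)
  nlinarith [norm_nonneg (a-b)]

/-- Möbius map of the unit disk -/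
noncomputable def mob (a z : ℂ) : ℂ := (a - z) / (1 - conj a * z)

lemma mob_denom_ne {a z : ℂ} (ha : ‖a‖ < 1) (hz : ‖z‖ < 1) :
    (1 : ℂ) - conj a * z ≠ 0 := by
  intro h
  have h2 : ‖conj a * z‖ < 1 := by
    rw [norm_mul, Complex.norm_conj]
    nlinarith [norm_nonneg a, norm_nonneg z]
  have h3 : (1:ℂ) = conj a * z := by linear_combination h
  rw [← h3] at h2
  simp at h2

lemma abs_mob_lt_one {a z : ℂ} (ha : ‖a‖ < 1) (hz : ‖z‖ < 1) :
    ‖mob a z‖ < 1 := by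
  have hd := mob_denom_ne ha hz
  have h := disk_identity 1 a z
  have h1 : 0 < (1 - ‖a‖^2) * (1 - ‖z‖^2) := by
    have h1a := norm_nonneg a
    have h1b := norm_nonneg z
    have : 0 < 1 - ‖a‖^2 := by nlinarith
    have : 0 < 1 - ‖z‖^2 := by nlinarith
    nlinarith
  have hdp : 0 < ‖1 - conj a * z‖ := norm_pos_iff.mpr hd
  rw [mob, norm_div, div_lt_one hdp]
  have hone : ((1:ℝ):ℂ)^2 = 1 := by norm_num
  rw [hone] at h
  nlinarith [norm_nonneg (a - z), norm_nonneg ((1:ℂ) - conj a * z)]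

lemma mob_mob {a z : ℂ} (ha : ‖a‖ < 1) (hz : ‖z‖ < 1) :
    mob a (mob a z) = z := by
  have hd := mob_denom_ne ha hz
  have haa : (1 : ℂ) - conj a * a ≠ 0 := mob_denom_ne ha ha
  have key : (1:ℂ) - conj a * mob a z = (1 - conj a * a) / (1 - conj a * z) := by
    rw [mob]
    field_simp
    ring
  have hd' : (1:ℂ) - z * conj a ≠ 0 := by rwa [mul_comm]
  have haa' : (1:ℂ) - a * conj a ≠ 0 := by rwa [mul_comm]
  rw [mob, key, mob]
  field_simp
  ring







/-- quantitative Schwarz-Pick lemma with margin, for the pair of points `0, τ`. -/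
lemma schwarz_pick_margin {f : ℂ → ℂ} {δ : ℝ} (hδ0 : 0 < δ) (hδ1 : δ ≤ 1)
    (hf : DifferentiableOn ℂ f (ball 0 1))
    (hb : ∀ z ∈ ball (0:ℂ) 1, ‖f z‖ ≤ 1 - δ)
    {τ : ℝ} (hτ0 : 0 ≤ τ) (hτ1 : τ < 1) :
    ‖f τ - f 0‖ * (1 + δ/2)
      ≤ (1 + (δ/2)*(1-δ)) * (τ * ‖1 - conj (f 0) * f τ‖) := by
  set t : ℝ := δ/2 with ht
  have ht0 : 0 < t := by positivity
  have h0mem : (0:ℂ) ∈ ball (0:ℂ) 1 := by simp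
  have hτmem : ((τ:ℝ):ℂ) ∈ ball (0:ℂ) 1 := by
    simp [mem_ball_zero_iff, Complex.norm_of_nonneg hτ0, abs_of_nonneg hτ0, hτ1]
  set A := f 0 with hA
  set B := f ((τ:ℝ):ℂ) with hB
  have hAb : ‖A‖ ≤ 1 - δ := hb 0 h0mem
  have hBb : ‖B‖ ≤ 1 - δ := hb _ hτmem
  have hA1 : ‖A‖ < 1 := by linarith
  have hB1 : ‖B‖ < 1 := by linarith
  -- the dilated map
  set g : ℂ → ℂ := fun z => (1 + (t:ℂ)) * f z - (t:ℂ) * A with hg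
  have hgb : ∀ z ∈ ball (0:ℂ) 1, ‖g z‖ ≤ 1 - δ^2 := by
    intro z hz
    have h1 : ‖g z‖ ≤ ‖(1 + (t:ℂ)) * f z‖ + ‖(t:ℂ) * A‖ := by
      simpa [hg, sub_eq_add_neg] using norm_add_le ((1 + (t:ℂ)) * f z) (-((t:ℂ) * A))
    have h2 : ‖(1 + (t:ℂ)) * f z‖ = (1+t) * ‖f z‖ := by
      rw [norm_mul]
      congr 1
      rw [show (1 + (t:ℂ)) = (((1+t : ℝ)):ℂ) by push_cast; ring]
      rw [Complex.norm_of_nonneg (by linarith)]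
    have h3 : ‖(t:ℂ) * A‖ = t * ‖A‖ := by
      rw [norm_mul, Complex.norm_of_nonneg (by linarith)]
    have h4 := hb z hz
    have h5 := norm_nonneg (f z)
    have h6 := norm_nonneg A
    rw [h2, h3] at h1
    nlinarith
  have hgb1 : ∀ z ∈ ball (0:ℂ) 1, ‖g z‖ < 1 := by
    intro z hz
    have := hgb z hz
    nlinarith
  have hgdiff : DifferentiableOn ℂ g (ball 0 1) :=
    ((hf.const_mul _).sub (differentiableOn_const _))
  -- postcompose with the Möbius map
  set φ : ℂ → ℂ := fun z => mob A (g z) with hφ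
  have hφdiff : DifferentiableOn ℂ φ (ball 0 1) := by
    apply DifferentiableOn.div
    · exact (differentiableOn_const _).sub hgdiff
    · exact (differentiableOn_const _).sub ((differentiableOn_const _).mul hgdiff)
    · intro z hz
      exact mob_denom_ne hA1 (hgb1 z hz)
  have hφmaps : Set.MapsTo φ (ball 0 1) (ball 0 1) := by
    intro z hz
    simp only [mem_ball_zero_iff]
    exact abs_mob_lt_one hA1 (hgb1 z hz)
  have hφ0 : φ 0 = 0 := by
    have : g 0 = A := by simp [hg, hA]; ring
    simp [hφ, this, mob]
  have hschwarz : ‖φ ((τ:ℝ):ℂ)‖ ≤ ‖((τ:ℝ):ℂ)‖ := by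
    apply norm_le_norm_of_mapsTo_ball hφdiff (hφmaps.mono_right ball_subset_closedBall) hφ0
    simpa [Complex.norm_of_nonneg hτ0, abs_of_nonneg hτ0] using hτ1
  have habsτ : ‖((τ:ℝ):ℂ)‖ = τ := by
    rw [Complex.norm_of_nonneg hτ0]
  set C := g ((τ:ℝ):ℂ) with hC
  have hCabs : ‖C‖ < 1 := hgb1 _ hτmem
  have hdne : (1:ℂ) - conj A * C ≠ 0 := mob_denom_ne hA1 hCabs
  have habs2 : ‖A - C‖ ≤ τ * ‖1 - conj A * C‖ := by
    have h := hschwarz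
    rw [habsτ] at h
    have : ‖φ ((τ:ℝ):ℂ)‖ = ‖A - C‖ / ‖1 - conj A * C‖ := by
      simp [hφ, mob, hC, norm_div]
    rw [this, div_le_iff₀ (norm_pos_iff.mpr hdne)] at h
    linarith
  have hACeq : A - C = (1 + (t:ℂ)) * (A - B) := by
    simp only [hC, hg]
    ring
  have hACabs : ‖A - C‖ = (1+t) * ‖A - B‖ := by
    rw [hACeq, norm_mul]
    congr 1
    rw [show (1 + (t:ℂ)) = (((1+t : ℝ)):ℂ) by push_cast; ring]
    rw [Complex.norm_of_nonneg (by linarith)]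
  have hdenom : ‖1 - conj A * C‖
      ≤ ‖1 - conj A * B‖ + t * (‖A‖ * ‖A - B‖) := by
    have heq : (1:ℂ) - conj A * C = (1 - conj A * B) - (t:ℂ) * (conj A * (B - A)) := by
      simp only [hC, hg]
      ring
    rw [heq]
    have h1 : ‖(1 - conj A * B) - (t:ℂ) * (conj A * (B - A))‖
        ≤ ‖1 - conj A * B‖ + ‖(t:ℂ) * (conj A * (B - A))‖ := by
      simpa [sub_eq_add_neg] using
        norm_add_le (1 - conj A * B) (-((t:ℂ) * (conj A * (B - A))))
    have h2 : ‖(t:ℂ) * (conj A * (B - A))‖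
        = t * (‖A‖ * ‖A - B‖) := by
      rw [norm_mul, norm_mul, Complex.norm_conj, Complex.norm_of_nonneg (by linarith),
        norm_sub_rev]
    rw [h2] at h1
    exact h1
  have hP : ‖A - B‖ ≤ ‖1 - conj A * B‖ := by
    have := sigma_le_one (R := 1) one_pos hA1.le hB1.le
    simpa using this
  -- assemble
  have hgoal : (1+t) * ‖A - B‖
      ≤ (1 + t*(1-δ)) * (τ * ‖1 - conj A * B‖) := by
    have h1 : (1+t) * ‖A - B‖
        ≤ τ * (‖1 - conj A * B‖ + t * (‖A‖ * ‖A - B‖)) := by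
      rw [← hACabs]
      calc ‖A - C‖ ≤ τ * ‖1 - conj A * C‖ := habs2
        _ ≤ _ := by
          apply mul_le_mul_of_nonneg_left hdenom hτ0
    have h2 : ‖A‖ * ‖A - B‖ ≤ (1-δ) * ‖1 - conj A * B‖ := by
      have := norm_nonneg (A - B)
      have := norm_nonneg A
      nlinarith
    nlinarith [norm_nonneg (1 - conj A * B), mul_le_mul_of_nonneg_left h2 hτ0]
  have hfin : ‖f ((τ:ℝ):ℂ) - f 0‖ = ‖A - B‖ := by
    rw [← hA, ← hB, norm_sub_rev]
  rw [hfin]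
  have : ‖1 - conj (f 0) * f ((τ:ℝ):ℂ)‖ = ‖1 - conj A * B‖ := by
    rw [← hA, ← hB]
  rw [this]
  linarith [hgoal]




set_option maxHeartbeats 1000000

lemma CS2 (p q u v : ℝ) : (p*u + q*v)^2 ≤ (p^2+q^2)*(u^2+v^2) := by
  nlinarith [sq_nonneg (p*v - q*u)]

/-- real arithmetic core of the self-map property -/
lemma core_real {ξ ρ β b W D Q : ℝ} (hξ : 0 < ξ) (hρ : 0 ≤ ρ)
    (hsξ : ξ*(1-ρ^2) ≤ 1)
    (hW : 0 ≤ W) (hW2 : W^2 = ρ^4 + 2*ρ^2*(1-ρ^2)*β + (1-ρ^2)^2*b^2)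
    (hD0 : 0 ≤ D) (hD : D ≤ ρ*ξ)
    (hQdef : Q = (1 - (2*(ξ+β) - ξ^2 - b^2))*ρ^2 - ξ^2*ρ^4 - b^2)
    (hQ : 0 ≤ Q) :
    0 ≤ (1 - 2*β + b^2)*ρ^2 - b^2 - 2*W*D - (1-ρ^2)*D^2 ∧
    (0 < Q → 0 < ρ → 0 < (1 - 2*β + b^2)*ρ^2 - b^2 - 2*W*D - (1-ρ^2)*D^2) := by
  set s : ℝ := 1 - ρ^2 with hs
  set P : ℝ := ρ*ξ with hP
  set A : ℝ := (1 - 2*β + b^2)*ρ^2 - b^2 with hA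
  set T : ℝ := A - s*P^2 with hT
  have hP0 : 0 ≤ P := by rw [hP]; positivity
  have id1 : T = Q + 2*ξ*ρ^2*(1-ξ*s) := by
    rw [hT, hA, hQdef, hs, hP]; ring
  have id2 : T^2 - 4*P^2*W^2 = Q^2 + 4*ξ*ρ^2*Q := by
    rw [hT, hA, hQdef, hs, hP]
    linear_combination (-(4*(ρ*ξ)^2)) * hW2
  have hQ2 : 0 ≤ 4*ξ*ρ^2*Q := by positivity
  have hQ2' : 0 ≤ Q^2 + 4*ξ*ρ^2*Q := by positivity
  rcases le_or_gt 0 s with hs0 | hs0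
  · -- s ≥ 0
    have h1ξs : 0 ≤ 1 - ξ*s := by linarith
    have haux : 0 ≤ 2*ξ*ρ^2*(1-ξ*s) :=
      mul_nonneg (by positivity) h1ξs
    have hT0 : 0 ≤ T := by rw [id1]; linarith
    have hPW : 0 ≤ 2*P*W + T := by nlinarith [mul_nonneg hP0 hW]
    have hTW : 2*P*W ≤ T := by nlinarith [id2, hPW, hQ2']
    have hmono : A - 2*W*D - s*D^2 ≥ T - 2*P*W := by
      have hfac : 0 ≤ (P - D) * (2*W + s*(P+D)) := by
        apply mul_nonneg (by linarith)
        have : 0 ≤ s*(P+D) := mul_nonneg hs0 (by linarith)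
        linarith
      nlinarith [hfac]
    refine ⟨by linarith, ?_⟩
    intro hQp hρp
    have hstrictQ : 0 < Q^2 + 4*ξ*ρ^2*Q := by
      have : 0 < 4*ξ*ρ^2*Q := by positivity
      positivity
    have hTWs : 2*P*W < T := by nlinarith [id2, hPW, hstrictQ]
    linarith
  · -- s < 0
    have hsneg : 0 < -s := by linarith
    have h1ξs : (1:ℝ) ≤ 1 - ξ*s := by nlinarith
    have haux : 0 ≤ 2*ξ*ρ^2*(1-ξ*s) :=
      mul_nonneg (by positivity) (by linarith)
    have hT0 : 0 ≤ T := by rw [id1]; linarith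
    have hPW : 0 ≤ 2*P*W + T := by nlinarith [mul_nonneg hP0 hW]
    rcases le_or_gt W (-s*P) with hcase | hcase
    · -- interior minimum case : G₀ ≥ Q + 2ξρ²
      have h1 : 0 ≤ (s*D + W)^2 := sq_nonneg _
      have h2 : W^2 ≤ s^2*P^2 := by nlinarith
      have h3 : (-s)*(Q + 2*ξ*ρ^2) = (-s)*A - s^2*P^2 := by
        rw [hA, hQdef, hs, hP]; ring
      have hkey : (-s)*(Q + 2*ξ*ρ^2) ≤ (-s)*(A - 2*W*D - s*D^2) := by nlinarith
      have hG : Q + 2*ξ*ρ^2 ≤ A - 2*W*D - s*D^2 := le_of_mul_le_mul_left hkey hsneg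
      have hpos : 0 ≤ ξ*ρ^2 := by positivity
      refine ⟨by linarith, ?_⟩
      intro hQp hρp
      have : 0 < ξ*ρ^2 := by positivity
      linarith
    · -- boundary minimum case
      have hTW : 2*P*W ≤ T := by nlinarith [id2, hPW, hQ2']
      have hmono : A - 2*W*D - s*D^2 ≥ T - 2*P*W := by
        have hfac : 0 ≤ (P - D) * (2*W + s*(P+D)) := by
          apply mul_nonneg (by linarith)
          have h4 : s*(2*P) ≤ s*(P+D) := by nlinarith
          nlinarith
        nlinarith [hfac]
      refine ⟨by linarith, ?_⟩
      intro hQp hρp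
      have hstrictQ : 0 < Q^2 + 4*ξ*ρ^2*Q := by
        have : 0 < 4*ξ*ρ^2*Q := by positivity
        positivity
      have hTWs : 2*P*W < T := by nlinarith [id2, hPW, hstrictQ]
      linarith

/-- the complex self-map core inequality -/
lemma core {ξ ρ : ℝ} {η x : ℂ} (hξ : 0 < ξ) (hρ : 0 ≤ ρ)
    (hsξ : ξ*(1-ρ^2) ≤ 1)
    (hQ : 0 ≤ (1 - (2*(ξ + η.re) - ξ^2 - ‖η‖^2))*ρ^2 - ξ^2*ρ^4 - ‖η‖^2)
    (hx : ‖x - (1-η)‖ ≤ ρ*ξ) :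
    ‖x-1‖^2 ≤ ρ^2 * ‖x‖^2 ∧
    (0 < (1 - (2*(ξ + η.re) - ξ^2 - ‖η‖^2))*ρ^2 - ξ^2*ρ^4 - ‖η‖^2 →
      0 < ρ → ‖x-1‖^2 < ρ^2 * ‖x‖^2) := by
  have hb2 : ‖η‖^2 = η.re^2 + η.im^2 := by
    rw [Complex.sq_norm, Complex.normSq_apply]; ring
  set d : ℂ := x - (1-η) with hd
  have hD0 : 0 ≤ ‖d‖ := norm_nonneg d
  have hD2 : ‖d‖^2 = d.re^2 + d.im^2 := by
    rw [Complex.sq_norm, Complex.normSq_apply]; ring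
  set W : ℝ := Real.sqrt ((ρ^2+(1-ρ^2)*η.re)^2 + ((1-ρ^2)*η.im)^2) with hW
  have hW0 : 0 ≤ W := Real.sqrt_nonneg _
  have hW2' : W^2 = (ρ^2+(1-ρ^2)*η.re)^2 + ((1-ρ^2)*η.im)^2 := by
    rw [hW, Real.sq_sqrt (by positivity)]
  have hW2 : W^2 = ρ^4 + 2*ρ^2*(1-ρ^2)*η.re + (1-ρ^2)^2*‖η‖^2 := by
    rw [hW2']; linear_combination (-((1-ρ^2)^2)) * hb2
  have hE2 : ((ρ^2+(1-ρ^2)*η.re)*d.re + ((1-ρ^2)*η.im)*d.im)^2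
      ≤ W^2 * ‖d‖^2 := by
    rw [hW2', hD2]
    exact CS2 _ _ _ _
  have hE : -(W*‖d‖) ≤ (ρ^2+(1-ρ^2)*η.re)*d.re + ((1-ρ^2)*η.im)*d.im := by
    nlinarith [hE2, mul_nonneg hW0 hD0]
  have hG : ρ^2 * ‖x‖^2 - ‖x-1‖^2
      = ((1 - 2*η.re + ‖η‖^2)*ρ^2 - ‖η‖^2)
        + 2*((ρ^2+(1-ρ^2)*η.re)*d.re + ((1-ρ^2)*η.im)*d.im)
        - (1-ρ^2)*(d.re^2+d.im^2) := by
    have hx_eq : x = (1-η) + d := by rw [hd]; ring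
    rw [hx_eq]
    simp only [Complex.sq_norm, Complex.normSq_apply, Complex.add_re, Complex.add_im,
      Complex.sub_re, Complex.sub_im, Complex.one_re, Complex.one_im]
    ring
  have hcore := core_real (β := η.re) (b := ‖η‖) (D := ‖d‖)
    (Q := (1 - (2*(ξ + η.re) - ξ^2 - ‖η‖^2))*ρ^2 - ξ^2*ρ^4 - ‖η‖^2)
    hξ hρ hsξ hW0 hW2 hD0 (by rw [hd]; exact hx) rfl hQ
  constructor
  · nlinarith [hcore.1, hG, hE, hD2]
  · intro hQp hρp
    nlinarith [hcore.2 hQp hρp, hG, hE, hD2]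

lemma core_ne_zero {ξ ρ : ℝ} {η : ℂ} {x : ℂ} (hξ : 0 < ξ) (hρ : 0 ≤ ρ)
    (hsξ : ξ*(1-ρ^2) ≤ 1)
    (hQ : 0 ≤ (1 - (2*(ξ + η.re) - ξ^2 - ‖η‖^2))*ρ^2 - ξ^2*ρ^4 - ‖η‖^2)
    (hx : ‖x - (1-η)‖ ≤ ρ*ξ) : x ≠ 0 := by
  intro h0
  have h := (core hξ hρ hsξ hQ hx).1
  rw [h0] at h
  norm_num at h

lemma core_abs_le {ξ ρ : ℝ} {η : ℂ} {x : ℂ} (hξ : 0 < ξ) (hρ : 0 ≤ ρ)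
    (hsξ : ξ*(1-ρ^2) ≤ 1)
    (hQ : 0 ≤ (1 - (2*(ξ + η.re) - ξ^2 - ‖η‖^2))*ρ^2 - ξ^2*ρ^4 - ‖η‖^2)
    (hx : ‖x - (1-η)‖ ≤ ρ*ξ) :
    ‖1 - 1/x‖ ≤ ρ := by
  have hne := core_ne_zero hξ hρ hsξ hQ hx
  have h := (core hξ hρ hsξ hQ hx).1
  have hxp : 0 < ‖x‖ := (norm_pos_iff.mpr ·) hne
  have h2 : (1:ℂ) - 1/x = (x-1)/x := by field_simp
  rw [h2, norm_div, div_le_iff₀ hxp]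
  nlinarith [norm_nonneg (x-1), mul_nonneg hρ hxp.le]

lemma core_abs_lt {ξ ρ : ℝ} {η : ℂ} {x : ℂ} (hξ : 0 < ξ) (hρ : 0 < ρ)
    (hsξ : ξ*(1-ρ^2) ≤ 1)
    (hQ : 0 < (1 - (2*(ξ + η.re) - ξ^2 - ‖η‖^2))*ρ^2 - ξ^2*ρ^4 - ‖η‖^2)
    (hx : ‖x - (1-η)‖ ≤ ρ*ξ) :
    ‖1 - 1/x‖ < ρ := by
  have hne := core_ne_zero hξ hρ.le hsξ hQ.le hx
  have h := (core hξ hρ.le hsξ hQ.le hx).2 hQ hρ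
  have hxp : 0 < ‖x‖ := (norm_pos_iff.mpr ·) hne
  have h2 : (1:ℂ) - 1/x = (x-1)/x := by field_simp
  rw [h2, norm_div, div_lt_iff₀ hxp]
  nlinarith [norm_nonneg (x-1), mul_nonneg hρ.le hxp.le]

lemma core_lower {ξ ρ : ℝ} {η : ℂ} {x : ℂ} (hξ : 0 < ξ) (hρ : 0 ≤ ρ)
    (hsξ : ξ*(1-ρ^2) ≤ 1)
    (hQ : 0 ≤ (1 - (2*(ξ + η.re) - ξ^2 - ‖η‖^2))*ρ^2 - ξ^2*ρ^4 - ‖η‖^2)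
    (hx : ‖x - (1-η)‖ ≤ ρ*ξ) :
    1 ≤ (1+ρ) * ‖x‖ := by
  have hne := core_ne_zero hξ hρ hsξ hQ hx
  have h := (core hξ hρ hsξ hQ hx).1
  have hxp : 0 < ‖x‖ := (norm_pos_iff.mpr ·) hne
  have habs : ‖x-1‖ ≤ ρ * ‖x‖ := by
    nlinarith [norm_nonneg (x-1), mul_nonneg hρ hxp.le]
  have htri : (1:ℝ) ≤ ‖x‖ + ‖x-1‖ := by
    have h5 := norm_add_le x (1 - x)
    simp only [add_sub_cancel] at h5
    calc (1:ℝ) = ‖(1:ℂ)‖ := by simp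
      _ ≤ ‖x‖ + ‖1-x‖ := h5
      _ = ‖x‖ + ‖x-1‖ := by rw [norm_sub_rev 1 x]
  nlinarith

lemma node_quad {gM ξM ηM γj ξj bj ρ : ℝ} (h1 : γj ≤ gM) (h2 : ξj ≤ ξM) (h3 : bj ≤ ηM)
    (h4 : 0 ≤ ξj) (h5 : 0 ≤ bj)
    (hg : 0 ≤ (1 - gM)*ρ^2 - ξM^2*ρ^4 - ηM^2) :
    0 ≤ (1 - γj)*ρ^2 - ξj^2*ρ^4 - bj^2 := by
  have e4 : 0 ≤ (ξM^2 - ξj^2) * ρ^4 := mul_nonneg (by nlinarith) (by positivity)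
  have e5 : 0 ≤ ηM^2 - bj^2 := by nlinarith
  have e6 : 0 ≤ (gM - γj) * ρ^2 := mul_nonneg (by linarith) (sq_nonneg ρ)
  nlinarith [e4, e5, e6]

lemma node_quad_strict {gM ξM ηM γj ξj bj ρ : ℝ} (h1 : γj ≤ gM) (h2 : ξj ≤ ξM) (h3 : bj ≤ ηM)
    (h4 : 0 ≤ ξj) (h5 : 0 ≤ bj)
    (hg : 0 < (1 - gM)*ρ^2 - ξM^2*ρ^4 - ηM^2) :
    0 < (1 - γj)*ρ^2 - ξj^2*ρ^4 - bj^2 := by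
  have e4 : 0 ≤ (ξM^2 - ξj^2) * ρ^4 := mul_nonneg (by nlinarith) (by positivity)
  have e5 : 0 ≤ ηM^2 - bj^2 := by nlinarith
  have e6 : 0 ≤ (gM - γj) * ρ^2 := mul_nonneg (by linarith) (sq_nonneg ρ)
  nlinarith [e4, e5, e6]











lemma abs_one_sub_inv_conj (z : ℂ) :
    ‖1 - 1/((starRingEnd ℂ) z)‖ = ‖1 - 1/z‖ := by
  rw [show (1:ℂ) - 1/((starRingEnd ℂ) z) = (starRingEnd ℂ) (1 - 1/z) by
    simp [map_sub, map_div₀], Complex.norm_conj]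

/-- The σ-contraction of one application of the fixed-point map. -/
lemma contract_lemma {n : ℕ} (cc : Fin n → ℂ) (ζ : Fin n → Fin n → ℂ)
    (rv rd : ℝ) (hrvpos : 0 < rv) (hrd0 : 0 ≤ rd) (hrdlt : rd < rv)
    (hne0 : ∀ v : Fin n → ℂ, (∀ j, ‖v j‖ ≤ rv) → ∀ i,
      cc i + ∑ j, ζ i j * v j ≠ 0)
    (hrdb : ∀ v : Fin n → ℂ, (∀ j, ‖v j‖ ≤ rv) → ∀ i,
      ‖1 - 1/(cc i + ∑ j, ζ i j * v j)‖ ≤ rd)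
    (w w' : Fin n → ℂ) (hw : ∀ j, ‖w j‖ < rv) (hw' : ∀ j, ‖w' j‖ < rv)
    (τ : ℝ) (hτ0 : 0 ≤ τ) (hτ1 : τ < 1)
    (hσj : ∀ j, ‖w j - w' j‖ * rv
      ≤ τ * ‖((rv:ℝ):ℂ)^2 - (starRingEnd ℂ) (w j) * w' j‖)
    (i : Fin n) :
    ‖(1 - 1/((starRingEnd ℂ) (cc i + ∑ j, ζ i j * w j)))
        - (1 - 1/((starRingEnd ℂ) (cc i + ∑ j, ζ i j * w' j)))‖ * rv
      ≤ ((1 + ((1 - rd/rv)/2)*(rd/rv))/(1+(1 - rd/rv)/2)) * τ *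
        ‖((rv:ℝ):ℂ)^2 -
          (starRingEnd ℂ) (1 - 1/((starRingEnd ℂ) (cc i + ∑ j, ζ i j * w j))) *
          (1 - 1/((starRingEnd ℂ) (cc i + ∑ j, ζ i j * w' j)))‖ := by
  have hrvC : ((rv:ℝ):ℂ) ≠ 0 := by
    simpa using ne_of_gt hrvpos
  obtain ⟨δ, hδ⟩ : ∃ t:ℝ, t = 1 - rd/rv := ⟨_, rfl⟩
  have h1δ : 1 - δ = rd/rv := by rw [hδ]; ring
  have hδ0 : 0 < δ := by
    rw [hδ]; have : rd/rv < 1 := (div_lt_one hrvpos).mpr hrdlt; linarith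
  have hδ1 : δ ≤ 1 := by
    rw [hδ]; have : 0 ≤ rd/rv := div_nonneg hrd0 hrvpos.le; linarith
  have hκform : ((1 + ((1 - rd/rv)/2)*(rd/rv))/(1+(1 - rd/rv)/2))
      = (1 + (δ/2)*(1-δ))/(1+δ/2) := by rw [h1δ, ← hδ]
  rw [hκform]
  set A : ℂ := 1 - 1/((starRingEnd ℂ) (cc i + ∑ j, ζ i j * w j)) with hA
  set B : ℂ := 1 - 1/((starRingEnd ℂ) (cc i + ∑ j, ζ i j * w' j)) with hB
  by_cases hww : w = w'
  · subst hww
    simp only [hA, hB, sub_self, norm_zero, zero_mul]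
    apply mul_nonneg (mul_nonneg ?_ hτ0) (norm_nonneg _)
    apply div_nonneg (by nlinarith) (by linarith)
  have hτpos : 0 < τ := by
    rcases eq_or_lt_of_le hτ0 with h | h
    · exfalso; apply hww; funext j
      have h2 := hσj j
      rw [← h, zero_mul] at h2
      have h3 : ‖w j - w' j‖ = 0 := by
        nlinarith [norm_nonneg (w j - w' j)]
      exact sub_eq_zero.mp (norm_eq_zero.mp h3)
    · exact h
  have hτC : ((τ:ℝ):ℂ) ≠ 0 := by
    simpa using ne_of_gt hτpos
  -- normalized (conjugated) points
  obtain ⟨x, hx⟩ : ∃ f : Fin n → ℂ, f = fun j => (starRingEnd ℂ) (w j) / ((rv:ℝ):ℂ) := ⟨_, rfl⟩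
  obtain ⟨y, hy⟩ : ∃ f : Fin n → ℂ, f = fun j => (starRingEnd ℂ) (w' j) / ((rv:ℝ):ℂ) := ⟨_, rfl⟩
  have habsx : ∀ j, ‖x j‖ = ‖w j‖ / rv := by
    intro j; rw [hx]
    simp [norm_div, Complex.norm_conj, Complex.norm_of_nonneg hrvpos.le, abs_of_pos hrvpos]
  have habsy : ∀ j, ‖y j‖ = ‖w' j‖ / rv := by
    intro j; rw [hy]
    simp [norm_div, Complex.norm_conj, Complex.norm_of_nonneg hrvpos.le, abs_of_pos hrvpos]
  have hxlt : ∀ j, ‖x j‖ < 1 := fun j => by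
    rw [habsx]; exact (div_lt_one hrvpos).mpr (hw j)
  have hylt : ∀ j, ‖y j‖ < 1 := fun j => by
    rw [habsy]; exact (div_lt_one hrvpos).mpr (hw' j)
  -- pseudo-distance bound on the β's
  have hbabs : ∀ j, ‖mob (x j) (y j)‖ ≤ τ := by
    intro j
    have hnum : ‖x j - y j‖ = ‖w j - w' j‖ / rv := by
      rw [hx, hy]
      simp only [div_sub_div_same]
      rw [norm_div, ← map_sub, Complex.norm_conj, Complex.norm_of_nonneg hrvpos.le]
    have hd1 : (1:ℂ) - (starRingEnd ℂ) (x j) * y j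
        = (starRingEnd ℂ) ((((rv:ℝ):ℂ)^2 - (starRingEnd ℂ) (w j) * w' j)) / ((rv:ℝ):ℂ)^2 := by
      rw [hx, hy]
      simp only [map_div₀, Complex.conj_conj, map_sub, map_mul, map_pow, Complex.conj_ofReal]
      field_simp
    have hdeneq : ‖1 - (starRingEnd ℂ) (x j) * y j‖
        = ‖((rv:ℝ):ℂ)^2 - (starRingEnd ℂ) (w j) * w' j‖ / (rv^2) := by
      rw [hd1, norm_div, Complex.norm_conj]
      congr 1
      rw [norm_pow, Complex.norm_of_nonneg hrvpos.le]
    have hdenpos : 0 < ‖((rv:ℝ):ℂ)^2 - (starRingEnd ℂ) (w j) * w' j‖ := by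
      have h2 := sigma_lt_one hrvpos (hw j) (hw' j)
      have h3 : 0 ≤ ‖w j - w' j‖ * rv := by positivity
      linarith
    rw [mob, norm_div, hnum, hdeneq]
    have hsimp : ‖w j - w' j‖ / rv
        / (‖((rv:ℝ):ℂ)^2 - (starRingEnd ℂ) (w j) * w' j‖ / rv^2)
        = ‖w j - w' j‖ * rv
          / ‖((rv:ℝ):ℂ)^2 - (starRingEnd ℂ) (w j) * w' j‖ := by
      field_simp
    rw [hsimp, div_le_iff₀ hdenpos]
    exact hσj j
  -- interpolating analytic disks
  obtain ⟨θ, hθ⟩ : ∃ f : Fin n → ℂ, f = fun j => mob (x j) (y j) / ((τ:ℝ):ℂ) := ⟨_, rfl⟩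
  have hθabs : ∀ j, ‖θ j‖ ≤ 1 := by
    intro j; rw [hθ]
    simp only [norm_div, Complex.norm_of_nonneg hτpos.le]
    rw [div_le_one hτpos]; exact hbabs j
  obtain ⟨g, hg⟩ : ∃ f : Fin n → ℂ → ℂ, f = fun j lam => mob (x j) (θ j * lam) := ⟨_, rfl⟩
  have hθlam : ∀ j (lam : ℂ), ‖lam‖ < 1 → ‖θ j * lam‖ < 1 := by
    intro j lam hlam
    rw [norm_mul]
    calc ‖θ j‖ * ‖lam‖ ≤ 1 * ‖lam‖ :=
          mul_le_mul_of_nonneg_right (hθabs j) (norm_nonneg lam)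
      _ < 1 := by rwa [one_mul]
  have hgabs : ∀ j (lam:ℂ), ‖lam‖ < 1 → ‖g j lam‖ < 1 := by
    intro j lam hlam; rw [hg]
    exact abs_mob_lt_one (hxlt j) (hθlam j lam hlam)
  obtain ⟨wf, hwf⟩ : ∃ f : ℂ → Fin n → ℂ,
      f = fun lam k => (starRingEnd ℂ) (((rv:ℝ):ℂ) * g k lam) := ⟨_, rfl⟩
  have hwfabs : ∀ (lam:ℂ), ‖lam‖ < 1 → ∀ k, ‖wf lam k‖ ≤ rv := by
    intro lam hlam k; rw [hwf]
    simp only [Complex.norm_conj, norm_mul, Complex.norm_of_nonneg hrvpos.le]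
    nlinarith [hgabs k lam hlam, norm_nonneg (g k lam)]
  obtain ⟨den, hden⟩ : ∃ f : ℂ → ℂ,
      f = fun lam => (starRingEnd ℂ) (cc i + ∑ k, ζ i k * wf lam k) := ⟨_, rfl⟩
  obtain ⟨ψ, hψ⟩ : ∃ f : ℂ → ℂ, f = fun lam => (1 - 1/(den lam)) / ((rv:ℝ):ℂ) := ⟨_, rfl⟩
  have hdenne : ∀ lam:ℂ, ‖lam‖ < 1 → den lam ≠ 0 := by
    intro lam hlam; rw [hden]
    simp only [ne_eq, map_eq_zero]
    exact hne0 (wf lam) (hwfabs lam hlam) i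
  have hψabs : ∀ lam ∈ ball (0:ℂ) 1, ‖ψ lam‖ ≤ 1 - δ := by
    intro lam hlam
    rw [mem_ball_zero_iff] at hlam
    have hlam' : ‖lam‖ < 1 := hlam
    rw [hψ]
    simp only [norm_div, Complex.norm_of_nonneg hrvpos.le]
    rw [div_le_iff₀ hrvpos]
    have h2 : ‖1 - 1/(den lam)‖
        = ‖1 - 1/(cc i + ∑ k, ζ i k * wf lam k)‖ := by
      rw [hden]; exact abs_one_sub_inv_conj _
    rw [h2]
    have h3 : (1-δ)*rv = rd := by rw [h1δ]; field_simp
    rw [h3]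
    exact hrdb (wf lam) (hwfabs lam hlam') i
  -- differentiability
  have hgdiff : ∀ k, DifferentiableOn ℂ (g k) (ball 0 1) := by
    intro k; rw [hg]
    simp only [mob]
    apply DifferentiableOn.div
    · exact (differentiableOn_const _).sub ((differentiableOn_id).const_mul _)
    · exact (differentiableOn_const _).sub (((differentiableOn_id).const_mul _).const_mul _)
    · intro z hz
      rw [mem_ball_zero_iff] at hz
      exact mob_denom_ne (hxlt k) (hθlam k z hz)
  have hdeneq2 : den = fun lam =>
      (starRingEnd ℂ) (cc i) + ∑ k, (starRingEnd ℂ) (ζ i k) * (((rv:ℝ):ℂ) * g k lam) := by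
    funext lam; rw [hden, hwf]
    simp only [map_add, map_sum, map_mul, Complex.conj_conj]
  have hdendiff : DifferentiableOn ℂ den (ball 0 1) := by
    rw [hdeneq2]
    apply DifferentiableOn.add (differentiableOn_const _)
    apply DifferentiableOn.fun_sum
    intro k _
    exact ((hgdiff k).const_mul _).const_mul _
  have hψdiff : DifferentiableOn ℂ ψ (ball 0 1) := by
    rw [hψ]
    apply DifferentiableOn.div_const
    apply DifferentiableOn.sub (differentiableOn_const _)
    apply DifferentiableOn.div (differentiableOn_const _) hdendiff
    intro z hz
    rw [mem_ball_zero_iff] at hz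
    exact hdenne z hz
  -- endpoint values
  have hg0 : ∀ k, g k 0 = x k := by
    intro k; rw [hg]; simp [mob]
  have hwf0 : wf 0 = w := by
    funext k; rw [hwf]
    simp only [hg0 k, hx]
    rw [mul_div_cancel₀ _ hrvC, Complex.conj_conj]
  have hgτ : ∀ k, g k ((τ:ℝ):ℂ) = y k := by
    intro k; rw [hg]
    simp only [hθ]
    rw [div_mul_cancel₀ _ hτC]
    exact mob_mob (hxlt k) (hylt k)
  have hwfτ : wf ((τ:ℝ):ℂ) = w' := by
    funext k; rw [hwf]
    simp only [hgτ k, hy]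
    rw [mul_div_cancel₀ _ hrvC, Complex.conj_conj]
  have hψ0 : ψ 0 = A / ((rv:ℝ):ℂ) := by
    rw [hψ, hA]
    simp only [hden, hwf0]
  have hψτ : ψ ((τ:ℝ):ℂ) = B / ((rv:ℝ):ℂ) := by
    rw [hψ, hB]
    simp only [hden, hwfτ]
  -- Schwarz–Pick with margin
  have hmargin := schwarz_pick_margin hδ0 hδ1 hψdiff hψabs hτ0 hτ1
  rw [hψ0, hψτ] at hmargin
  -- convert back
  have hconv1 : ‖B / ((rv:ℝ):ℂ) - A / ((rv:ℝ):ℂ)‖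
      = ‖A - B‖ / rv := by
    rw [div_sub_div_same, norm_div, Complex.norm_of_nonneg hrvpos.le,
      norm_sub_rev]
  have hconv2 : (1:ℂ) - (starRingEnd ℂ) (A / ((rv:ℝ):ℂ)) * (B / ((rv:ℝ):ℂ))
      = (((rv:ℝ):ℂ)^2 - (starRingEnd ℂ) A * B) / ((rv:ℝ):ℂ)^2 := by
    rw [map_div₀, Complex.conj_ofReal]
    field_simp
  have hconv3 : ‖(1:ℂ) - (starRingEnd ℂ) (A / ((rv:ℝ):ℂ)) * (B / ((rv:ℝ):ℂ))‖
      = ‖((rv:ℝ):ℂ)^2 - (starRingEnd ℂ) A * B‖ / rv^2 := by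
    rw [hconv2, norm_div, norm_pow, Complex.norm_of_nonneg hrvpos.le]
  rw [hconv1, hconv3] at hmargin
  -- final algebra
  have hrv2pos : (0:ℝ) < rv^2 := by positivity
  have h1half : (0:ℝ) < 1 + δ/2 := by linarith
  have hDn := norm_nonneg (((rv:ℝ):ℂ)^2 - (starRingEnd ℂ) A * B)
  have hAB := norm_nonneg (A - B)
  have h4 := mul_le_mul_of_nonneg_right hmargin hrv2pos.le
  have h5 : ‖A - B‖ / rv * (1 + δ/2) * rv^2
      = ‖A - B‖ * rv * (1 + δ/2) := by
    field_simp
  have h6 : (1 + δ/2*(1-δ)) * (τ * (‖((rv:ℝ):ℂ)^2 - (starRingEnd ℂ) A * B‖ / rv^2)) * rv^2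
      = (1 + δ/2*(1-δ)) * τ * ‖((rv:ℝ):ℂ)^2 - (starRingEnd ℂ) A * B‖ := by
    field_simp
  rw [h5, h6] at h4
  rw [div_mul_eq_mul_div, div_mul_eq_mul_div, le_div_iff₀ h1half]
  calc ‖A - B‖ * rv * (1 + δ/2)
      ≤ (1 + δ/2*(1-δ)) * τ * ‖((rv:ℝ):ℂ)^2 - (starRingEnd ℂ) A * B‖ := h4
    _ = (1 + δ/2*(1-δ)) * (τ * ‖((rv:ℝ):ℂ)^2 - (starRingEnd ℂ) A * B‖) := by ring
    _ = (1 + δ/2*(1-δ)) * τ * ‖((rv:ℝ):ℂ)^2 - (starRingEnd ℂ) A * B‖ := by ring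
  







/-- The full fixed-point existence and uniqueness machine. -/
lemma machine {n : ℕ} (hne : Nonempty (Fin n)) (cc : Fin n → ℂ) (ζ : Fin n → Fin n → ℂ)
    (ξf : Fin n → ℝ) (rl rv rd : ℝ)
    (hξf0 : ∀ i, 0 < ξf i)
    (hrvpos : 0 < rv) (hrd0 : 0 ≤ rd) (hrdlt : rd < rv) (hrl0 : 0 ≤ rl) (hrlrv : rl < rv)
    (hsum : ∀ (w : Fin n → ℂ) (M : ℝ) (i : Fin n), (∀ j, ‖w j‖ ≤ M) →
      ‖(cc i + ∑ j, ζ i j * w j) - cc i‖ ≤ ξf i * M)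
    (hne0 : ∀ v : Fin n → ℂ, (∀ j, ‖v j‖ ≤ rv) → ∀ i,
      cc i + ∑ j, ζ i j * v j ≠ 0)
    (hrdb : ∀ v : Fin n → ℂ, (∀ j, ‖v j‖ ≤ rv) → ∀ i,
      ‖1 - 1/(cc i + ∑ j, ζ i j * v j)‖ ≤ rd)
    (hrlb : ∀ (x : ℂ) (i : Fin n), ‖x - cc i‖ ≤ rl * ξf i →
      ‖1 - 1/x‖ ≤ rl)
    (hstrict : ∀ (ρ:ℝ), rl < ρ → ρ ≤ rd → ∀ (x:ℂ) (i : Fin n),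
      ‖x - cc i‖ ≤ ρ * ξf i → ‖1-1/x‖ < ρ) :
    ∃! u : Fin n → ℂ, (∀ i, u i ≠ 0) ∧
      (fun i => cc i + ∑ j, ζ i j * (1 - 1/((starRingEnd ℂ) (u j)))) = u ∧
      ∀ i, ‖u i - cc i‖ ≤ rl * ξf i := by
  classical
  have huniv : (Finset.univ : Finset (Fin n)).Nonempty := Finset.univ_nonempty
  obtain ⟨j00⟩ := hne
  obtain ⟨uM, huM⟩ : ∃ f : (Fin n → ℂ) → Fin n → ℂ,
      f = fun w i => cc i + ∑ j, ζ i j * w j := ⟨_, rfl⟩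
  obtain ⟨Ψ, hΨ⟩ : ∃ f : (Fin n → ℂ) → Fin n → ℂ,
      f = fun w j => 1 - 1/((starRingEnd ℂ) (uM w j)) := ⟨_, rfl⟩
  obtain ⟨κ, hκ⟩ : ∃ t:ℝ, t = (1 + ((1 - rd/rv)/2)*(rd/rv))/(1+(1 - rd/rv)/2) := ⟨_, rfl⟩
  have hrdrv0 : 0 ≤ rd/rv := div_nonneg hrd0 hrvpos.le
  have hrdrv1 : rd/rv < 1 := (div_lt_one hrvpos).mpr hrdlt
  have hκ0 : 0 ≤ κ := by
    rw [hκ]; apply div_nonneg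
    · nlinarith
    · nlinarith
  have hκ1 : κ < 1 := by
    rw [hκ]; rw [div_lt_one (by nlinarith)]; nlinarith
  have hcontr : ∀ w w' : Fin n → ℂ, (∀ j, ‖w j‖ < rv) →
      (∀ j, ‖w' j‖ < rv) → ∀ τ : ℝ, 0 ≤ τ → τ < 1 →
      (∀ j, ‖w j - w' j‖ * rv
        ≤ τ * ‖((rv:ℝ):ℂ)^2 - (starRingEnd ℂ) (w j) * w' j‖) →
      ∀ i, ‖Ψ w i - Ψ w' i‖ * rv
        ≤ κ * τ * ‖((rv:ℝ):ℂ)^2 - (starRingEnd ℂ) (Ψ w i) * Ψ w' i‖ := by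
    intro w w' hw hw' τ h0 h1 hj i
    simp only [hΨ, huM, hκ]
    exact contract_lemma cc ζ rv rd hrvpos hrd0 hrdlt hne0 hrdb w w' hw hw' τ h0 h1 hj i
  have hepos : ∀ (a b : ℂ), ‖a‖ < rv → ‖b‖ < rv →
      0 < ‖((rv:ℝ):ℂ)^2 - (starRingEnd ℂ) a * b‖ := by
    intro a b ha hb
    have h1 := sigma_lt_one hrvpos ha hb
    have h2 : 0 ≤ ‖a-b‖ * rv := by positivity
    linarith
  have hΨb : ∀ (w : Fin n → ℂ), (∀ j, ‖w j‖ ≤ rv) → ∀ j,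
      ‖Ψ w j‖ ≤ rd := by
    intro w hw j
    simp only [hΨ]
    calc ‖1 - 1/((starRingEnd ℂ) (uM w j))‖
        = ‖1 - 1/(uM w j)‖ := abs_one_sub_inv_conj _
      _ ≤ rd := by simp only [huM]; exact hrdb w hw j
  -- the Picard iteration
  obtain ⟨Wseq, hW0, hWs⟩ : ∃ W : ℕ → Fin n → ℂ, W 0 = (fun _ => 0) ∧
      ∀ k, W (k+1) = Ψ (W k) := by
    refine ⟨fun k => Ψ^[k] (fun _ => 0), rfl, ?_⟩
    intro k
    show Ψ^[k+1] (fun _ => 0) = Ψ (Ψ^[k] (fun _ => 0))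
    exact Function.iterate_succ_apply' Ψ k _
  have hWb : ∀ k j, ‖Wseq k j‖ ≤ rd := by
    intro k
    induction k with
    | zero => intro j; rw [hW0]; simpa using hrd0
    | succ k ih =>
      intro j; rw [hWs k]
      exact hΨb (Wseq k) (fun j => le_trans (ih j) hrdlt.le) j
  have hWlt : ∀ k j, ‖Wseq k j‖ < rv := fun k j => lt_of_le_of_lt (hWb k j) hrdlt
  obtain ⟨s0, hs0⟩ : ∃ t:ℝ, t = Finset.univ.sup' huniv (fun j =>
      ‖Wseq 0 j - Wseq 1 j‖ * rv
        / ‖((rv:ℝ):ℂ)^2 - (starRingEnd ℂ) (Wseq 0 j) * Wseq 1 j‖) := ⟨_, rfl⟩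
  have hs00 : 0 ≤ s0 := by
    rw [hs0]
    refine le_trans ?_ (Finset.le_sup' (f := fun j =>
      ‖Wseq 0 j - Wseq 1 j‖ * rv
        / ‖((rv:ℝ):ℂ)^2 - (starRingEnd ℂ) (Wseq 0 j) * Wseq 1 j‖)
      (Finset.mem_univ j00))
    positivity
  have hs01 : s0 < 1 := by
    rw [hs0]
    apply (Finset.sup'_lt_iff huniv).mpr
    intro j _
    rw [div_lt_one (hepos _ _ (hWlt 0 j) (hWlt 1 j))]
    exact sigma_lt_one hrvpos (hWlt 0 j) (hWlt 1 j)
  have hdecay : ∀ k j, ‖Wseq k j - Wseq (k+1) j‖ * rv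
      ≤ (κ^k * s0) * ‖((rv:ℝ):ℂ)^2
          - (starRingEnd ℂ) (Wseq k j) * Wseq (k+1) j‖ := by
    intro k
    induction k with
    | zero =>
      intro j
      have he := hepos _ _ (hWlt 0 j) (hWlt 1 j)
      rw [pow_zero, one_mul]
      have h1 : ‖Wseq 0 j - Wseq 1 j‖ * rv
          / ‖((rv:ℝ):ℂ)^2 - (starRingEnd ℂ) (Wseq 0 j) * Wseq 1 j‖ ≤ s0 := by
        rw [hs0]
        exact Finset.le_sup' (f := fun j => ‖Wseq 0 j - Wseq 1 j‖ * rv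
          / ‖((rv:ℝ):ℂ)^2 - (starRingEnd ℂ) (Wseq 0 j) * Wseq 1 j‖)
          (Finset.mem_univ j)
      calc ‖Wseq 0 j - Wseq 1 j‖ * rv
          = (‖Wseq 0 j - Wseq 1 j‖ * rv
            / ‖((rv:ℝ):ℂ)^2 - (starRingEnd ℂ) (Wseq 0 j) * Wseq 1 j‖)
            * ‖((rv:ℝ):ℂ)^2 - (starRingEnd ℂ) (Wseq 0 j) * Wseq 1 j‖ :=
            (div_mul_cancel₀ _ he.ne').symm
        _ ≤ s0 * ‖((rv:ℝ):ℂ)^2 - (starRingEnd ℂ) (Wseq 0 j) * Wseq 1 j‖ :=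
            mul_le_mul_of_nonneg_right h1 he.le
    | succ k ih =>
      have hτ0' : 0 ≤ κ^k * s0 := by positivity
      have hτ1' : κ^k * s0 < 1 := by
        have h2 : κ^k ≤ 1 := pow_le_one₀ hκ0 hκ1.le
        nlinarith
      have h2 := hcontr (Wseq k) (Wseq (k+1)) (hWlt k) (hWlt (k+1)) (κ^k*s0) hτ0' hτ1' ih
      intro j
      have h3 := h2 j
      rw [← hWs k, ← hWs (k+1)] at h3
      calc ‖Wseq (k+1) j - Wseq (k+1+1) j‖ * rv
          ≤ κ * (κ^k*s0) * ‖((rv:ℝ):ℂ)^2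
            - (starRingEnd ℂ) (Wseq (k+1) j) * Wseq (k+1+1) j‖ := h3
        _ = (κ^(k+1)*s0) * ‖((rv:ℝ):ℂ)^2
            - (starRingEnd ℂ) (Wseq (k+1) j) * Wseq (k+1+1) j‖ := by ring
  have hcauchy : CauchySeq Wseq := by
    apply cauchySeq_of_le_geometric (r := κ) (C := 2*rv*s0) hκ1
    intro k
    rw [dist_pi_le_iff (by positivity)]
    intro j
    rw [Complex.dist_eq]
    have h1 := hdecay k j
    have h2 : ‖((rv:ℝ):ℂ)^2 - (starRingEnd ℂ) (Wseq k j) * Wseq (k+1) j‖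
        ≤ 2*rv^2 := by
      calc ‖((rv:ℝ):ℂ)^2 - (starRingEnd ℂ) (Wseq k j) * Wseq (k+1) j‖
          ≤ ‖((rv:ℝ):ℂ)^2‖
            + ‖(starRingEnd ℂ) (Wseq k j) * Wseq (k+1) j‖ := by
            exact norm_sub_le _ _
        _ ≤ rv^2 + rv*rv := by
            have e1 : ‖((rv:ℝ):ℂ)^2‖ = rv^2 := by
              rw [norm_pow, Complex.norm_of_nonneg hrvpos.le]
            have e2 : ‖(starRingEnd ℂ) (Wseq k j) * Wseq (k+1) j‖ ≤ rv * rv := by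
              rw [norm_mul, Complex.norm_conj]
              exact mul_le_mul (hWlt k j).le (hWlt (k+1) j).le (norm_nonneg _) hrvpos.le
            linarith
        _ = 2*rv^2 := by ring
    have h3 : ‖Wseq k j - Wseq (k+1) j‖ * rv ≤ (κ^k*s0) * (2*rv^2) :=
      le_trans h1 (mul_le_mul_of_nonneg_left h2 (by positivity))
    nlinarith [h3, hrvpos, norm_nonneg (Wseq k j - Wseq (k+1) j)]
  obtain ⟨wstar, hwstar⟩ := cauchySeq_tendsto_of_complete hcauchy
  have hwtend : ∀ j, Filter.Tendsto (fun k => Wseq k j) Filter.atTop (nhds (wstar j)) :=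
    fun j => tendsto_pi_nhds.mp hwstar j
  have hwsb : ∀ j, ‖wstar j‖ ≤ rd := by
    intro j
    have h2 : Filter.Tendsto (fun k => ‖Wseq k j‖) Filter.atTop
        (nhds (‖wstar j‖)) :=
      (continuous_norm.continuousAt.tendsto).comp (hwtend j)
    apply le_of_tendsto h2
    filter_upwards with k using hWb k j
  have hwslt : ∀ j, ‖wstar j‖ < rv := fun j => lt_of_le_of_lt (hwsb j) hrdlt
  have hfix : Ψ wstar = wstar := by
    have hlim2 : Filter.Tendsto (fun k => Wseq (k+1)) Filter.atTop (nhds wstar) :=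
      hwstar.comp (Filter.tendsto_add_atTop_nat 1)
    have hlim3 : Filter.Tendsto (fun k => Ψ (Wseq k)) Filter.atTop (nhds (Ψ wstar)) := by
      rw [tendsto_pi_nhds]
      intro j
      have hu : Filter.Tendsto (fun k => uM (Wseq k) j) Filter.atTop (nhds (uM wstar j)) := by
        simp only [huM]
        apply Filter.Tendsto.const_add
        apply tendsto_finset_sum
        intro l _
        exact Filter.Tendsto.const_mul _ (hwtend l)
      have hunz : (starRingEnd ℂ) (uM wstar j) ≠ 0 := by
        simp only [ne_eq, map_eq_zero]
        simp only [huM]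
        exact hne0 wstar (fun j => (hwslt j).le) j
      have hconj : Filter.Tendsto (fun k => (starRingEnd ℂ) (uM (Wseq k) j)) Filter.atTop
          (nhds ((starRingEnd ℂ) (uM wstar j))) :=
        (Complex.continuous_conj.continuousAt.tendsto).comp hu
      simp only [hΨ]
      exact Filter.Tendsto.const_sub _ (Filter.Tendsto.div tendsto_const_nhds hconj hunz)
    have h4 : (fun k => Ψ (Wseq k)) = fun k => Wseq (k+1) := by
      funext k; rw [hWs k]
    rw [h4] at hlim3
    exact tendsto_nhds_unique hlim3 hlim2
  obtain ⟨ustar, hustar⟩ : ∃ u : Fin n → ℂ, u = uM wstar := ⟨_, rfl⟩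
  have hwsval : ∀ j, wstar j = 1 - 1/((starRingEnd ℂ) (ustar j)) := by
    intro j
    conv_lhs => rw [← hfix]
    simp only [hΨ, hustar]
  obtain ⟨ρs, hρs⟩ : ∃ t:ℝ, t = Finset.univ.sup' huniv (fun j => ‖wstar j‖) :=
    ⟨_, rfl⟩
  have hρsb : ∀ j, ‖wstar j‖ ≤ ρs := fun j => by
    rw [hρs]
    exact Finset.le_sup' (f := fun j => ‖wstar j‖) (Finset.mem_univ j)
  have hρsrd : ρs ≤ rd := by
    rw [hρs]; exact Finset.sup'_le huniv _ (fun j _ => hwsb j)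
  have humem : ∀ i, ‖ustar i - cc i‖ ≤ ξf i * ρs := by
    intro i; rw [hustar]
    simp only [huM]
    exact hsum wstar ρs i hρsb
  have hmemrl : ∀ i, ‖ustar i - cc i‖ ≤ rl * ξf i := by
    rcases le_or_gt ρs rl with h | h
    · intro i
      calc ‖ustar i - cc i‖ ≤ ξf i * ρs := humem i
        _ ≤ ξf i * rl := mul_le_mul_of_nonneg_left h (hξf0 i).le
        _ = rl * ξf i := mul_comm _ _
    · exfalso
      obtain ⟨j0, _, hj0⟩ := Finset.exists_mem_eq_sup' huniv (fun j => ‖wstar j‖)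
      have h1 : ‖1 - 1/(ustar j0)‖ < ρs := by
        apply hstrict ρs h hρsrd (ustar j0) j0
        calc ‖ustar j0 - cc j0‖ ≤ ξf j0 * ρs := humem j0
          _ = ρs * ξf j0 := mul_comm _ _
      have h2 : ‖wstar j0‖ = ‖1 - 1/(ustar j0)‖ := by
        rw [hwsval j0]; exact abs_one_sub_inv_conj _
      have h3 : ρs = ‖wstar j0‖ := by rw [hρs, hj0]
      exact absurd h1 (by rw [← h2, ← h3]; exact lt_irrefl ρs)
  have hune : ∀ i, ustar i ≠ 0 := by
    intro i
    rw [hustar]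
    simp only [huM]
    exact hne0 wstar (fun j => (hwslt j).le) i
  have hufix : (fun i => cc i + ∑ j, ζ i j * (1 - 1/((starRingEnd ℂ) (ustar j)))) = ustar := by
    funext i
    have hsummand : ∀ j, (1 : ℂ) - 1/((starRingEnd ℂ) (ustar j)) = wstar j :=
      fun j => (hwsval j).symm
    calc cc i + ∑ j, ζ i j * (1 - 1/((starRingEnd ℂ) (ustar j)))
        = cc i + ∑ j, ζ i j * wstar j := by
          congr 1
          exact Finset.sum_congr rfl (fun j _ => by rw [hsummand j])
      _ = uM wstar i := by rw [huM]
      _ = ustar i := by rw [hustar]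
  refine ⟨ustar, ⟨hune, hufix, hmemrl⟩, ?_⟩
  rintro v ⟨hv0, hvfix, hvmem⟩
  obtain ⟨wv, hwv⟩ : ∃ f : Fin n → ℂ, f = fun j => 1 - 1/((starRingEnd ℂ) (v j)) := ⟨_, rfl⟩
  have hveq : uM wv = v := by
    funext i
    conv_rhs => rw [← hvfix]
    simp only [huM, hwv]
  have hwvb : ∀ j, ‖wv j‖ ≤ rl := by
    intro j
    rw [hwv]
    calc ‖1 - 1/((starRingEnd ℂ) (v j))‖
        = ‖1 - 1/(v j)‖ := abs_one_sub_inv_conj _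
      _ ≤ rl := hrlb (v j) j (hvmem j)
  have hΨwv : Ψ wv = wv := by
    funext j
    simp only [hΨ]
    rw [hveq]
    simp only [hwv]
  have hwvlt : ∀ j, ‖wv j‖ < rv := fun j => lt_of_le_of_lt (hwvb j) hrlrv
  obtain ⟨τu, hτu⟩ : ∃ t:ℝ, t = Finset.univ.sup' huniv (fun j =>
      ‖wv j - wstar j‖ * rv
        / ‖((rv:ℝ):ℂ)^2 - (starRingEnd ℂ) (wv j) * wstar j‖) := ⟨_, rfl⟩
  have heposu : ∀ j, 0 < ‖((rv:ℝ):ℂ)^2 - (starRingEnd ℂ) (wv j) * wstar j‖ :=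
    fun j => hepos _ _ (hwvlt j) (hwslt j)
  have hτu0 : 0 ≤ τu := by
    rw [hτu]
    refine le_trans ?_ (Finset.le_sup' (f := fun j =>
      ‖wv j - wstar j‖ * rv
        / ‖((rv:ℝ):ℂ)^2 - (starRingEnd ℂ) (wv j) * wstar j‖)
      (Finset.mem_univ j00))
    positivity
  have hτu1 : τu < 1 := by
    rw [hτu]
    apply (Finset.sup'_lt_iff huniv).mpr
    intro j _
    rw [div_lt_one (heposu j)]
    exact sigma_lt_one hrvpos (hwvlt j) (hwslt j)
  have hτub : ∀ j, ‖wv j - wstar j‖ * rv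
      ≤ τu * ‖((rv:ℝ):ℂ)^2 - (starRingEnd ℂ) (wv j) * wstar j‖ := by
    intro j
    have h1 : ‖wv j - wstar j‖ * rv
        / ‖((rv:ℝ):ℂ)^2 - (starRingEnd ℂ) (wv j) * wstar j‖ ≤ τu := by
      rw [hτu]
      exact Finset.le_sup' (f := fun j => ‖wv j - wstar j‖ * rv
        / ‖((rv:ℝ):ℂ)^2 - (starRingEnd ℂ) (wv j) * wstar j‖)
        (Finset.mem_univ j)
    calc ‖wv j - wstar j‖ * rv
        = (‖wv j - wstar j‖ * rv
          / ‖((rv:ℝ):ℂ)^2 - (starRingEnd ℂ) (wv j) * wstar j‖)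
          * ‖((rv:ℝ):ℂ)^2 - (starRingEnd ℂ) (wv j) * wstar j‖ :=
          (div_mul_cancel₀ _ (heposu j).ne').symm
      _ ≤ τu * ‖((rv:ℝ):ℂ)^2 - (starRingEnd ℂ) (wv j) * wstar j‖ :=
          mul_le_mul_of_nonneg_right h1 (heposu j).le
  have hcon := hcontr wv wstar hwvlt hwslt τu hτu0 hτu1 hτub
  have hconf : ∀ i, ‖wv i - wstar i‖ * rv
      ≤ κ * τu * ‖((rv:ℝ):ℂ)^2 - (starRingEnd ℂ) (wv i) * wstar i‖ := by
    intro i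
    have h5 := hcon i
    rw [hΨwv, hfix] at h5
    exact h5
  have hτuz : τu ≤ 0 := by
    by_contra hpos
    push_neg at hpos
    obtain ⟨j0, _, hj0⟩ := Finset.exists_mem_eq_sup' huniv (fun j =>
      ‖wv j - wstar j‖ * rv
        / ‖((rv:ℝ):ℂ)^2 - (starRingEnd ℂ) (wv j) * wstar j‖)
    have h1 : ‖wv j0 - wstar j0‖ * rv
        = τu * ‖((rv:ℝ):ℂ)^2 - (starRingEnd ℂ) (wv j0) * wstar j0‖ := by
      rw [hτu, hj0]
      exact (div_mul_cancel₀ _ (heposu j0).ne').symm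
    have h2 := hconf j0
    rw [h1] at h2
    nlinarith [mul_pos (sub_pos.mpr hκ1) (mul_pos hpos (heposu j0))]
  have hweq : wv = wstar := by
    funext j
    have h1 := hτub j
    have h2 : ‖wv j - wstar j‖ * rv ≤ 0 := by
      have h3 : τu * ‖((rv:ℝ):ℂ)^2 - (starRingEnd ℂ) (wv j) * wstar j‖ ≤ 0 :=
        mul_nonpos_of_nonpos_of_nonneg hτuz (norm_nonneg _)
      linarith
    have h4 : ‖wv j - wstar j‖ = 0 := by
      nlinarith [norm_nonneg (wv j - wstar j)]
    exact sub_eq_zero.mp (norm_eq_zero.mp h4)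
  rw [← hveq, hweq, ← hustar]

end PFaux

end PFauxSection

section MainTheorem

open Complex Metric ComplexConjugate PFaux

set_option maxHeartbeats 1600000

/-- under conditions (C) with `ξ_i(S) > 0` for all `i`, the fixed point
power flow equation `u = F(u)` has exactly one solution in the closure of `D(r̲)`. -/
theorem pf_solution_exists_unique {n : ℕ} (hn : 1 ≤ n)
    (Z : Matrix (Fin n) (Fin n) ℂ) (hZ : IsUnit Z.det)
    (S0 σ S : Fin n → ℂ) (hS : S = S0 + σ)
    (hc1 : gammaMax Z S σ + 2 * xiMax Z S * etaMax Z σ < 1)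
    (hc2 : xiMax Z S - etaMax Z σ ≤ 1)
    (hxi : ∀ i, 0 < xiI Z S i) :
    ∃! u : Fin n → ℂ, (∀ i, u i ≠ 0) ∧ pfMap Z S σ u = u ∧
      ∀ i, ‖u i - (1 - etaI Z σ i)‖ ≤ rLow Z S σ * xiI Z S i := by
  classical
  have hne : Nonempty (Fin n) := ⟨⟨0, hn⟩⟩
  have huniv : (Finset.univ : Finset (Fin n)).Nonempty := Finset.univ_nonempty
  -- basic sup facts
  have hξle : ∀ j, xiI Z S j ≤ xiMax Z S := fun j =>
    le_ciSup (Set.Finite.bddAbove (Set.finite_range _)) j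
  have hηle : ∀ j, ‖etaI Z σ j‖ ≤ etaMax Z σ := fun j =>
    le_ciSup (f := fun i => ‖etaI Z σ i‖)
      (Set.Finite.bddAbove (Set.finite_range _)) j
  have hγle : ∀ j, gammaI Z S σ j ≤ gammaMax Z S σ := fun j =>
    le_ciSup (Set.Finite.bddAbove (Set.finite_range _)) j
  have hξpos : 0 < xiMax Z S := lt_of_lt_of_le (hxi ⟨0, hn⟩) (hξle ⟨0, hn⟩)
  have hηnn : 0 ≤ etaMax Z σ := le_trans (norm_nonneg _) (hηle ⟨0, hn⟩)
  have hUpos' : 2 * xiMax Z S * etaMax Z σ < 1 - gammaMax Z S σ := by linarith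
  have hξη : 0 ≤ xiMax Z S * etaMax Z σ := mul_nonneg hξpos.le hηnn
  have hU0 : 0 < 1 - gammaMax Z S σ := lt_of_le_of_lt (by linarith) hUpos'
  -- the discriminant and the roots
  have hΔpos : 0 < (1 - gammaMax Z S σ) ^ 2 - 4 * (xiMax Z S) ^ 2 * (etaMax Z σ) ^ 2 := by
    nlinarith [hUpos', hξη]
  obtain ⟨E, hE⟩ : ∃ x:ℝ,
      x = Real.sqrt ((1 - gammaMax Z S σ) ^ 2 - 4 * (xiMax Z S) ^ 2 * (etaMax Z σ) ^ 2) :=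
    ⟨_, rfl⟩
  have hE2 : E ^ 2 = (1 - gammaMax Z S σ) ^ 2 - 4 * (xiMax Z S) ^ 2 * (etaMax Z σ) ^ 2 := by
    rw [hE]; exact Real.sq_sqrt hΔpos.le
  have hEpos : 0 < E := by rw [hE]; exact Real.sqrt_pos.mpr hΔpos
  have hEleU : E ≤ 1 - gammaMax Z S σ := by
    nlinarith [hE2, hEpos, hU0, sq_nonneg (xiMax Z S * etaMax Z σ)]
  obtain ⟨xlo, hxlo⟩ : ∃ x:ℝ, x = (1 - gammaMax Z S σ - E) / (2 * (xiMax Z S) ^ 2) :=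
    ⟨_, rfl⟩
  have hrLow : rLow Z S σ = Real.sqrt xlo := by rw [hxlo, hE]; rfl
  have hxlo0 : 0 ≤ xlo := by
    rw [hxlo]; exact div_nonneg (by linarith) (by positivity)
  have hrlo2 : rLow Z S σ ^ 2 = xlo := by rw [hrLow]; exact Real.sq_sqrt hxlo0
  have hrlo0 : 0 ≤ rLow Z S σ := by rw [hrLow]; exact Real.sqrt_nonneg _
  obtain ⟨xv, hxv⟩ : ∃ x:ℝ, x = (1 - gammaMax Z S σ) / (2 * (xiMax Z S) ^ 2) := ⟨_, rfl⟩
  have hxvpos : 0 < xv := by rw [hxv]; positivity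
  have hxloxv : xlo < xv := by
    rw [hxlo, hxv]
    have h2 : (0:ℝ) < 2 * (xiMax Z S) ^ 2 := by positivity
    rw [div_lt_div_iff₀ h2 h2]
    nlinarith
  obtain ⟨rv, hrv⟩ : ∃ x:ℝ, x = Real.sqrt xv := ⟨_, rfl⟩
  have hrv2 : rv ^ 2 = xv := by rw [hrv]; exact Real.sq_sqrt hxvpos.le
  have hrvpos : 0 < rv := by rw [hrv]; exact Real.sqrt_pos.mpr hxvpos
  have hrloltrv : rLow Z S σ < rv := by
    rw [hrLow, hrv]; exact Real.sqrt_lt_sqrt hxlo0 hxloxv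
  -- global quadratic facts
  have hQxlo : (1 - gammaMax Z S σ) * xlo - (xiMax Z S)^2 * xlo^2 - (etaMax Z σ)^2 = 0 := by
    rw [hxlo]
    have hξne : (xiMax Z S) ≠ 0 := ne_of_gt hξpos
    field_simp
    nlinarith [hE2]
  have hQposG : ∀ x : ℝ, xlo < x → x ≤ xv →
      0 < (1 - gammaMax Z S σ) * x - (xiMax Z S)^2 * x^2 - (etaMax Z σ)^2 := by
    intro x h1 h2
    have hfac : (1 - gammaMax Z S σ) * x - (xiMax Z S)^2 * x^2 - (etaMax Z σ)^2
        = ((1 - gammaMax Z S σ) * xlo - (xiMax Z S)^2 * xlo^2 - (etaMax Z σ)^2)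
          + (x - xlo) * ((1 - gammaMax Z S σ) - (xiMax Z S)^2*(x + xlo)) := by ring
    rw [hfac, hQxlo]
    have h5 : (xiMax Z S)^2*(2*xv) = 1 - gammaMax Z S σ := by
      rw [hxv]; field_simp
    have h3 : 0 < (1 - gammaMax Z S σ) - (xiMax Z S)^2*(x + xlo) := by
      have h6 : x + xlo < 2*xv := by linarith
      nlinarith [mul_lt_mul_of_pos_left h6 (show (0:ℝ) < (xiMax Z S)^2 by positivity)]
    nlinarith [mul_pos (show (0:ℝ) < x - xlo by linarith) h3]
  -- the consequence of condition (C2)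
  have hKey : xiMax Z S * (1 - xlo) ≤ 1 := by
    rcases le_or_gt (xiMax Z S) 1 with hξ1 | hξ1
    · rcases le_or_gt (1 - xlo) 0 with h | h
      · nlinarith
      · nlinarith
    · obtain ⟨im, him⟩ := Finite.exists_max (xiI Z S)
      have hξeq : xiMax Z S = xiI Z S im := le_antisymm (ciSup_le him) (hξle im)
      have hβ : -(‖etaI Z σ im‖) ≤ (etaI Z σ im).re := by
        have h1 : |(etaI Z σ im).re| ≤ ‖etaI Z σ im‖ := Complex.abs_re_le_norm _
        have h2 := neg_abs_le (etaI Z σ im).re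
        linarith
      have hble := hηle im
      have hbnn := norm_nonneg (etaI Z σ im)
      have hγim := hγle im
      rw [gammaI, ← hξeq] at hγim
      have hUb : 1 - gammaMax Z S σ
          ≤ (xiMax Z S - 1)^2 + 2*(etaMax Z σ) + (etaMax Z σ)^2 := by nlinarith
      have ht : xiMax Z S - 1 ≤ etaMax Z σ := by linarith
      have htpos : 0 < xiMax Z S - 1 := by linarith
      have hq0 : 0 ≤ (xiMax Z S)*((xiMax Z S - 1)^2 + (etaMax Z σ)^2)
          - (1 - gammaMax Z S σ)*(xiMax Z S - 1) := by
        nlinarith [sq_nonneg (etaMax Z σ - (xiMax Z S - 1)), hUb, htpos,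
          mul_le_mul_of_nonneg_right hUb htpos.le]
      have h1 : 0 ≤ 1 - gammaMax Z S σ - 2*(xiMax Z S)*(xiMax Z S - 1) := by
        nlinarith [hUpos', ht, hξpos]
      have h2 : E ≤ 1 - gammaMax Z S σ - 2*(xiMax Z S)*(xiMax Z S - 1) := by
        nlinarith [hE2, hEpos.le, h1, hq0, mul_nonneg (show (0:ℝ) ≤ 4*(xiMax Z S) by positivity) hq0]
      rw [hxlo]
      have hξne : (xiMax Z S) ≠ 0 := ne_of_gt hξpos
      rw [mul_sub, mul_one]
      rw [div_eq_mul_inv]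
      have hstep : xiMax Z S * ((1 - gammaMax Z S σ - E) * (2 * (xiMax Z S)^2)⁻¹)
          = (1 - gammaMax Z S σ - E) / (2 * xiMax Z S) := by
        field_simp
      rw [hstep]
      rw [sub_le_iff_le_add, ← sub_le_iff_le_add']
      rw [le_div_iff₀ (by positivity : (0:ℝ) < 2 * xiMax Z S)]
      nlinarith [h2, hξpos]
  -- ∀ ρ ≥ r̲ and node j, ξⱼ(1-ρ²) ≤ 1
  have hsρ : ∀ (ρ:ℝ), rLow Z S σ ≤ ρ → ∀ j, xiI Z S j * (1-ρ^2) ≤ 1 := by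
    intro ρ hρ j
    rcases le_or_gt (1-ρ^2) 0 with h | h
    · nlinarith [hxi j]
    · have h1 : xlo ≤ ρ^2 := by nlinarith [hrlo2, hrlo0]
      have h2 : xiI Z S j * (1-ρ^2) ≤ xiMax Z S * (1-xlo) := by
        apply mul_le_mul (hξle j) (by linarith) h.le hξpos.le
      linarith
  -- per-node quadratic bounds
  have hQnode : ∀ (ρ:ℝ) (j : Fin n),
      0 ≤ (1 - gammaMax Z S σ)*ρ^2 - (xiMax Z S)^2*ρ^4 - (etaMax Z σ)^2 →
      0 ≤ (1 - (2*(xiI Z S j + (etaI Z σ j).re) - (xiI Z S j)^2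
            - ‖etaI Z σ j‖^2))*ρ^2
          - (xiI Z S j)^2*ρ^4 - ‖etaI Z σ j‖^2 := by
    intro ρ j hg
    have e1 : 2*(xiI Z S j + (etaI Z σ j).re) - (xiI Z S j)^2
        - ‖etaI Z σ j‖^2 ≤ gammaMax Z S σ := by
      have h := hγle j; rw [gammaI] at h; exact h
    exact node_quad e1 (hξle j) (hηle j) (hxi j).le (norm_nonneg _) hg
  have hQnodeS : ∀ (ρ:ℝ) (j : Fin n),
      0 < (1 - gammaMax Z S σ)*ρ^2 - (xiMax Z S)^2*ρ^4 - (etaMax Z σ)^2 →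
      0 < (1 - (2*(xiI Z S j + (etaI Z σ j).re) - (xiI Z S j)^2
            - ‖etaI Z σ j‖^2))*ρ^2
          - (xiI Z S j)^2*ρ^4 - ‖etaI Z σ j‖^2 := by
    intro ρ j hg
    have e1 : 2*(xiI Z S j + (etaI Z σ j).re) - (xiI Z S j)^2
        - ‖etaI Z σ j‖^2 ≤ gammaMax Z S σ := by
      have h := hγle j; rw [gammaI] at h; exact h
    exact node_quad_strict e1 (hξle j) (hηle j) (hxi j).le (norm_nonneg _) hg
  -- Q at radius rv and at radius rLow
  have hQrv : 0 < (1 - gammaMax Z S σ)*rv^2 - (xiMax Z S)^2*rv^4 - (etaMax Z σ)^2 := by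
    have h1 : rv^4 = (rv^2)^2 := by ring
    rw [h1, hrv2]
    exact hQposG xv hxloxv le_rfl
  have hQrlo : 0 ≤ (1 - gammaMax Z S σ)*(rLow Z S σ)^2 - (xiMax Z S)^2*(rLow Z S σ)^4
      - (etaMax Z σ)^2 := by
    have h1 : (rLow Z S σ)^4 = ((rLow Z S σ)^2)^2 := by ring
    rw [h1, hrlo2]
    linarith [hQxlo]
  have hQmid : ∀ ρ : ℝ, rLow Z S σ < ρ → ρ ≤ rv →
      0 < (1 - gammaMax Z S σ)*ρ^2 - (xiMax Z S)^2*ρ^4 - (etaMax Z σ)^2 := by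
    intro ρ h1 h2
    have h3 : ρ^4 = (ρ^2)^2 := by ring
    rw [h3]
    apply hQposG
    · nlinarith [hrlo2, hrlo0]
    · nlinarith [hrv2, hrvpos, hrlo0]
  -- ==================== complex machinery ====================
  have hζabs : ∀ i j, ‖Z i j * (starRingEnd ℂ) (S j)‖
      = ‖Z i j * S j‖ := by
    intro i j; rw [norm_mul, norm_mul, Complex.norm_conj]
  have hsum : ∀ (w : Fin n → ℂ) (M : ℝ) (i : Fin n), (∀ j, ‖w j‖ ≤ M) →
      ‖((1 - etaI Z σ i) + ∑ j, (Z i j * (starRingEnd ℂ) (S j)) * w j)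
        - (1 - etaI Z σ i)‖ ≤ xiI Z S i * M := by
    intro w M i hw
    have h0 : ((1 - etaI Z σ i) + ∑ j, (Z i j * (starRingEnd ℂ) (S j)) * w j)
        - (1 - etaI Z σ i) = ∑ j, (Z i j * (starRingEnd ℂ) (S j)) * w j := by ring
    rw [h0]
    refine le_trans (norm_sum_le _ _) ?_
    rw [xiI, Finset.sum_mul]
    apply Finset.sum_le_sum
    intro j _
    rw [norm_mul, hζabs i j]
    exact mul_le_mul_of_nonneg_left (hw j) (norm_nonneg _)
  have hrvle : rLow Z S σ ≤ rv := hrloltrv.le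
  have hne0 : ∀ v : Fin n → ℂ, (∀ j, ‖v j‖ ≤ rv) → ∀ i,
      (1 - etaI Z σ i) + ∑ j, (Z i j * (starRingEnd ℂ) (S j)) * v j ≠ 0 := by
    intro v hv i
    apply core_ne_zero (hxi i) (le_trans hrlo0 hrvle) (hsρ rv hrvle i) (hQnode rv i hQrv.le)
    calc ‖(((1:ℂ) - etaI Z σ i) + ∑ j, (Z i j * (starRingEnd ℂ) (S j)) * v j)
          - (1 - etaI Z σ i)‖ ≤ xiI Z S i * rv := hsum v rv i hv
      _ = rv * xiI Z S i := mul_comm _ _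
  -- the compactness argument producing the strict image radius rd
  have hKmax : ∀ i : Fin n, ∃ m : ℝ, m < rv ∧ 0 ≤ m ∧
      ∀ x : ℂ, ‖x - (1 - etaI Z σ i)‖ ≤ rv * xiI Z S i →
        ‖1 - 1/x‖ ≤ m := by
    intro i
    have hKc : IsCompact (Metric.closedBall ((1:ℂ) - etaI Z σ i) (rv * xiI Z S i)) :=
      isCompact_closedBall _ _
    have hKne : (Metric.closedBall ((1:ℂ) - etaI Z σ i) (rv * xiI Z S i)).Nonempty :=
      ⟨_, Metric.mem_closedBall_self (mul_nonneg hrvpos.le (hxi i).le)⟩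
    have hmem : ∀ x ∈ Metric.closedBall ((1:ℂ) - etaI Z σ i) (rv * xiI Z S i),
        ‖x - (1 - etaI Z σ i)‖ ≤ rv * xiI Z S i := by
      intro x hx
      rw [Metric.mem_closedBall, Complex.dist_eq] at hx
      exact hx
    have hne0' : ∀ x ∈ Metric.closedBall ((1:ℂ) - etaI Z σ i) (rv * xiI Z S i), x ≠ 0 := by
      intro x hx
      exact core_ne_zero (hxi i) (le_trans hrlo0 hrvle) (hsρ rv hrvle i)
        (hQnode rv i hQrv.le) (hmem x hx)
    have hcont : ContinuousOn (fun x : ℂ => ‖1 - 1/x‖)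
        (Metric.closedBall ((1:ℂ) - etaI Z σ i) (rv * xiI Z S i)) := by
      apply Continuous.comp_continuousOn continuous_norm
      exact ContinuousOn.sub continuousOn_const
        (ContinuousOn.div continuousOn_const continuousOn_id hne0')
    obtain ⟨xm, hxmK, hxmMax⟩ := hKc.exists_isMaxOn hKne hcont
    refine ⟨‖1 - 1/xm‖, ?_, norm_nonneg _, ?_⟩
    · exact core_abs_lt (hxi i) hrvpos (hsρ rv hrvle i) (hQnodeS rv i hQrv) (hmem xm hxmK)
    · intro x hx
      have hxK : x ∈ Metric.closedBall ((1:ℂ) - etaI Z σ i) (rv * xiI Z S i) := by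
        rw [Metric.mem_closedBall, Complex.dist_eq]; exact hx
      exact hxmMax hxK
  choose rpp hrpp1 hrpp2 hrpp3 using hKmax
  obtain ⟨rd, hrd⟩ : ∃ t:ℝ, t = Finset.univ.sup' huniv rpp := ⟨_, rfl⟩
  have hrdlt : rd < rv := by
    rw [hrd]; exact (Finset.sup'_lt_iff huniv).mpr (fun i _ => hrpp1 i)
  have hrd0 : 0 ≤ rd := by
    rw [hrd]
    exact le_trans (hrpp2 ⟨0,hn⟩) (Finset.le_sup' rpp (Finset.mem_univ _))
  have hrdb : ∀ v : Fin n → ℂ, (∀ j, ‖v j‖ ≤ rv) → ∀ i,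
      ‖1 - 1/((1 - etaI Z σ i) + ∑ j, (Z i j * (starRingEnd ℂ) (S j)) * v j)‖
        ≤ rd := by
    intro v hv i
    have h1 : ‖(((1:ℂ) - etaI Z σ i) + ∑ j, (Z i j * (starRingEnd ℂ) (S j)) * v j)
        - (1 - etaI Z σ i)‖ ≤ rv * xiI Z S i := by
      calc _ ≤ xiI Z S i * rv := hsum v rv i hv
        _ = rv * xiI Z S i := mul_comm _ _
    refine le_trans (hrpp3 i _ h1) ?_
    rw [hrd]; exact Finset.le_sup' rpp (Finset.mem_univ _)
  have hrlb : ∀ (x : ℂ) (i : Fin n),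
      ‖x - (1 - etaI Z σ i)‖ ≤ rLow Z S σ * xiI Z S i →
      ‖1 - 1/x‖ ≤ rLow Z S σ := by
    intro x i hx
    exact core_abs_le (hxi i) hrlo0 (hsρ _ le_rfl i) (hQnode _ i hQrlo) hx
  have hstrict : ∀ (ρ:ℝ), rLow Z S σ < ρ → ρ ≤ rd → ∀ (x:ℂ) (i : Fin n),
      ‖x - (1 - etaI Z σ i)‖ ≤ ρ * xiI Z S i → ‖1-1/x‖ < ρ := by
    intro ρ h1 h2 x i hx
    have h3 : ρ ≤ rv := le_trans h2 hrdlt.le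
    exact core_abs_lt (hxi i) (lt_of_le_of_lt hrlo0 h1) (hsρ ρ h1.le i)
      (hQnodeS ρ i (hQmid ρ h1 h3)) hx
  -- pfMap correspondence
  have hpfeq : ∀ u : Fin n → ℂ, pfMap Z S σ u
      = fun i => (1 - etaI Z σ i)
        + ∑ j, (Z i j * (starRingEnd ℂ) (S j)) * (1 - 1/((starRingEnd ℂ) (u j))) := by
    intro u; funext i
    simp only [pfMap, etaI]
    rw [show ∑ j, Z i j * (1 - 1 / (starRingEnd ℂ) (u j)) * (starRingEnd ℂ) (S j)
        = ∑ j, Z i j * (starRingEnd ℂ) (S j) * (1 - 1/((starRingEnd ℂ) (u j))) from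
      Finset.sum_congr rfl (fun j _ => by ring)]
  -- apply the machine
  have hmach := machine hne (fun i => 1 - etaI Z σ i)
    (fun i j => Z i j * (starRingEnd ℂ) (S j)) (xiI Z S) (rLow Z S σ) rv rd hxi
    hrvpos hrd0 hrdlt hrlo0 hrloltrv hsum hne0 hrdb hrlb hstrict
  obtain ⟨u0, ⟨hu1, hu2, hu3⟩, hu4⟩ := hmach
  refine ⟨u0, ⟨hu1, ?_, hu3⟩, ?_⟩
  · rw [hpfeq u0]
    exact hu2
  · rintro v ⟨hv1, hv2, hv3⟩
    apply hu4
    refine ⟨hv1, ?_, hv3⟩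
    rw [← hpfeq v]
    exact hv2

end MainTheorem
end

section
/- Suppose sqrt(ξ(S)) + sqrt(η(σ)) ≤ 1. Then γ(S,σ) + 2ξ(S)·η(σ) ≤ 1 and ξ(S) − η(σ) ≤ 1. Consequently, the solvability set of incremental loads certified by the condition of Dvijotham et al. is contained in the set of incremental loads satisfying the closed version of the proposed condition. -/
open Complex

/-- if `sqrt(ξ(S)) + sqrt(η(σ)) ≤ 1` (the condition of Dvijotham et
al.), then `γ(S,σ) + 2ξ(S)η(σ) ≤ 1` and `ξ(S) − η(σ) ≤ 1`; consequently the
incremental-load solvability set of Dvijotham et al. is contained in the closed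
version of the proposed one. -/
theorem dvijotham_incremental_condition_implies_proposed {n : ℕ} (hn : 1 ≤ n)
    (Z : Matrix (Fin n) (Fin n) ℂ) (hZ : IsUnit Z.det) (S0 : Fin n → ℂ) :
    (∀ σ S : Fin n → ℂ, S = S0 + σ →
      Real.sqrt (xiMax Z S) + Real.sqrt (etaMax Z σ) ≤ 1 →
      gammaMax Z S σ + 2 * xiMax Z S * etaMax Z σ ≤ 1 ∧ xiMax Z S - etaMax Z σ ≤ 1) ∧
    {σ : Fin n → ℂ | Real.sqrt (xiMax Z (S0 + σ)) + Real.sqrt (etaMax Z σ) ≤ 1} ⊆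
      {σ : Fin n → ℂ |
        gammaMax Z (S0 + σ) σ + 2 * xiMax Z (S0 + σ) * etaMax Z σ ≤ 1 ∧
        xiMax Z (S0 + σ) - etaMax Z σ ≤ 1} := by
  have key : ∀ σ S : Fin n → ℂ, S = S0 + σ →
      Real.sqrt (xiMax Z S) + Real.sqrt (etaMax Z σ) ≤ 1 →
      gammaMax Z S σ + 2 * xiMax Z S * etaMax Z σ ≤ 1 ∧ xiMax Z S - etaMax Z σ ≤ 1 := by
    intro σ S _ hcond
    have i0 : Fin n := ⟨0, hn⟩
    have : Nonempty (Fin n) := ⟨i0⟩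
    have hxi_le : ∀ i, xiI Z S i ≤ xiMax Z S := fun i =>
      le_ciSup (Set.Finite.bddAbove (Set.finite_range _)) i
    have heta_le : ∀ i, ‖etaI Z σ i‖ ≤ etaMax Z σ := fun i =>
      le_ciSup (f := fun i => ‖etaI Z σ i‖)
        (Set.Finite.bddAbove (Set.finite_range _)) i
    have hxi_nn : ∀ i, 0 ≤ xiI Z S i := fun i =>
      Finset.sum_nonneg fun j _ => norm_nonneg _
    have hx0 : (0:ℝ) ≤ xiMax Z S := le_trans (hxi_nn i0) (hxi_le i0)
    have he0 : (0:ℝ) ≤ etaMax Z σ :=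
      le_trans (norm_nonneg _) (heta_le i0)
    set a := Real.sqrt (xiMax Z S) with ha
    set b := Real.sqrt (etaMax Z σ) with hb
    have ha2 : a ^ 2 = xiMax Z S := Real.sq_sqrt hx0
    have hb2 : b ^ 2 = etaMax Z σ := Real.sq_sqrt he0
    have ha0 : 0 ≤ a := Real.sqrt_nonneg _
    have hb0 : 0 ≤ b := Real.sqrt_nonneg _
    have ha1 : a ≤ 1 := by linarith
    have hb1 : b ≤ 1 := by linarith
    have ha2le : a ^ 2 ≤ 1 := by nlinarith
    have hb2le : b ^ 2 ≤ 1 := by nlinarith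
    constructor
    · have hg : gammaMax Z S σ ≤ 1 - 2 * xiMax Z S * etaMax Z σ := by
        apply ciSup_le
        intro i
        have h1 : xiI Z S i ≤ a ^ 2 := ha2 ▸ hxi_le i
        have h2 : ‖etaI Z σ i‖ ≤ b ^ 2 := hb2 ▸ heta_le i
        have h3 := hxi_nn i
        have h4 : (0:ℝ) ≤ ‖etaI Z σ i‖ := norm_nonneg _
        have h5 : (etaI Z σ i).re ≤ ‖etaI Z σ i‖ := Complex.re_le_norm _
        have m1 : 0 ≤ (a ^ 2 - xiI Z S i) * (2 - a ^ 2 - xiI Z S i) :=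
          mul_nonneg (by linarith) (by linarith)
        have m2 : 0 ≤ (b ^ 2 - ‖etaI Z σ i‖) *
            (2 - b ^ 2 - ‖etaI Z σ i‖) :=
          mul_nonneg (by linarith) (by linarith)
        have k1 : 0 ≤ 1 - (a + b) ^ 2 := by nlinarith
        have k2 : 0 ≤ 1 - (a - b) ^ 2 := by nlinarith
        have key2 : 0 ≤ (1 - (a + b) ^ 2) * (1 - (a - b) ^ 2) := mul_nonneg k1 k2
        rw [gammaI, ← ha2, ← hb2]
        nlinarith [m1, m2, key2, h5]
      linarith
    · rw [← ha2, ← hb2]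
      nlinarith [sq_nonneg b]
  exact ⟨key, fun σ hσ => key σ (S0 + σ) rfl hσ⟩
end
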